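/- Let Γ be a symmetric numerical semigroup with δ := #(ℕ∖Γ) ≥ 1, let q ≥ 1, and take p = 1, a = 0 (so t_0 = (2δ−1)q − 1 and r_0 = qδ(δ−1)). Then there is an isomorphism of graded ℤ[U]-modules ℍ(R_{τ_0},χ_{τ_0})[qδ(δ−1)] ≅ T⁺_0 ⊕ T_0(α_{δ−1})^{⊕q} ⊕ ⊕_{l=1}^{(δ−1)q} T_{(⌊l/q⌋+1)·((l mod q) + l)}(α_{δ−1+⌈l/q⌉})^{⊕2}. -/

import Mathlib

noncomputable section

/-- `T⁺₀ = ℤ[U,U⁻¹]/(U·ℤ[U])`, modeled as finitely supported functions `ℕ → ℤ`;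
`Finsupp.single h 1` represents `U^{-h}`, which is homogeneous of degree `2h`. -/
abbrev TPlus : Type := ℕ →₀ ℤ

/-- The `U`-action on `T⁺₀`: `U · U^{-h} = U^{-(h-1)}` for `h ≥ 1`, `U · U^0 = 0`. -/
def shiftU : TPlus →ₗ[ℤ] TPlus where
  toFun f := Finsupp.comapDomain (· + 1) f (fun a _ b _ h => by simpa using h)
  map_add' f g := by
    ext h
    show (f + g) (h + 1) = f (h + 1) + g (h + 1)
    simp [Finsupp.comapDomain_apply]
  map_smul' c f := by
    ext h
    show (c • f) (h + 1) = c * f (h + 1)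
    simp [Finsupp.comapDomain_apply]

lemma shiftU_apply (f : TPlus) (h : ℕ) : shiftU f h = f (h + 1) := rfl

/-- The submodule `T₀(n) ⊂ T⁺₀` spanned by `U^{-h}`, `0 ≤ h ≤ n-1`. -/
def Tower (n : ℕ) : Submodule ℤ TPlus where
  carrier := {f | ∀ h, n ≤ h → f h = 0}
  add_mem' := by
    intro a b ha hb h hh
    simp [Finsupp.add_apply, ha h hh, hb h hh]
  zero_mem' := by intro h hh; rfl
  smul_mem' := by
    intro c f hf h hh
    simp [Finsupp.smul_apply, hf h hh]

/-- Homogeneity of degree `d` in the shifted module `T⁺_r` or `T_r(n)`: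
the coefficient of `U^{-h}` has degree `2h + r`. -/
def THomog (r d : ℚ) (f : TPlus) : Prop := ∀ h : ℕ, f h ≠ 0 → 2 * (h : ℚ) + r = d

/-- `ℍ(R,χ)` for a graph with vertex set `V`, adjacency `Adj` and grading `χ`:
functions `φ` from vertices to `T⁺₀` with `U · φ(v) = φ(w)` along edges with `χ v < χ w`. -/
def Hmod {V : Type} (Adj : V → V → Prop) (χ : V → ℤ) : Submodule ℤ (V → TPlus) where
  carrier := {φ | ∀ v w, Adj v w → χ v < χ w → shiftU (φ v) = φ w}
  add_mem' := by
    intro a b ha hb v w hvw hχ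
    simp only [Pi.add_apply, map_add, ha v w hvw hχ, hb v w hvw hχ]
  zero_mem' := by intro v w _ _; simp
  smul_mem' := by
    intro c f hf v w hvw hχ
    simp only [Pi.smul_apply, map_smul, hf v w hvw hχ]

lemma mem_Hmod {V : Type} {Adj : V → V → Prop} {χ : V → ℤ} {φ : V → TPlus} :
    φ ∈ Hmod Adj χ ↔ ∀ v w, Adj v w → χ v < χ w → shiftU (φ v) = φ w := Iff.rfl

/-- The (pointwise) `U`-action on `ℍ(R,χ)`. -/
def HU {V : Type} (Adj : V → V → Prop) (χ : V → ℤ) : Hmod Adj χ →ₗ[ℤ] Hmod Adj χ where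
  toFun φ := ⟨fun v => shiftU (φ.1 v), by
    intro v w hvw hχ
    show shiftU (shiftU (φ.1 v)) = shiftU (φ.1 w)
    rw [mem_Hmod.1 φ.2 v w hvw hχ]⟩
  map_add' a b := by
    apply Subtype.ext
    funext v
    simp
  map_smul' c a := by
    apply Subtype.ext
    funext v
    simp

/-- Homogeneity of degree `d` in the shifted module `ℍ(R,χ)[r]`:
`φ` is homogeneous of degree `d` if each `φ(v)` is homogeneous of degree `d - r - 2χ(v)`
in `T⁺₀`. -/
def HHomog {V : Type} (χ : V → ℤ) (r d : ℚ) (φ : V → TPlus) : Prop :=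
  ∀ v, THomog (2 * (χ v : ℚ) + r) d (φ v)

/-- The underlying module of a direct sum `T⁺ ⊕ ⊕_{i ∈ I} T(len i)`. -/
abbrev Targ {I : Type} (len : I → ℕ) : Type := TPlus × ((i : I) → Tower (len i))

def towerShift {n : ℕ} (f : Tower n) : Tower n :=
  ⟨shiftU f.1, by
    intro h hh
    rw [shiftU_apply]
    exact f.2 (h + 1) (by omega)⟩

/-- The `U`-action on `Targ len`. -/
def TargU {I : Type} (len : I → ℕ) : Targ len →ₗ[ℤ] Targ len where
  toFun x := (shiftU x.1, fun i => towerShift (x.2 i))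
  map_add' a b := by
    refine Prod.ext ?_ ?_
    · simp
    · funext i
      apply Subtype.ext
      simp [towerShift]
  map_smul' c a := by
    refine Prod.ext ?_ ?_
    · simp
    · funext i
      apply Subtype.ext
      simp [towerShift]

/-- Homogeneity of degree `d` in `T⁺_{r₀} ⊕ ⊕_{i ∈ I} T_{rI i}(len i)`. -/
def TargHomog {I : Type} {len : I → ℕ} (r₀ : ℚ) (rI : I → ℚ) (d : ℚ) (x : Targ len) : Prop :=
  THomog r₀ d x.1 ∧ ∀ i, THomog (rI i) d ((x.2 i) : TPlus)

end

noncomputable section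

/-- Pre-vertices of the graded root `R_τ` associated with `τ : {0,…,T₀} → ℤ`:
pairs `(i,k)` with `i ≤ T₀` and `τ i ≤ k`, representing the vertex `v_i^k`. -/
def RootVpre (T0 : ℕ) (τ : ℕ → ℤ) : Type := {x : ℕ × ℤ // x.1 ≤ T0 ∧ τ x.1 ≤ x.2}

/-- The identification `v_i^k ∼ v_j^k` whenever `k ≥ τ(l)` for every `l` between `i` and `j`. -/
def RootSetoid (T0 : ℕ) (τ : ℕ → ℤ) : Setoid (RootVpre T0 τ) where
  r x y := x.1.2 = y.1.2 ∧
    ∀ l : ℕ, ((x.1.1 ≤ l ∧ l ≤ y.1.1) ∨ (y.1.1 ≤ l ∧ l ≤ x.1.1)) → τ l ≤ x.1.2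
  iseqv := by
    constructor
    · intro x
      refine ⟨rfl, ?_⟩
      intro l hl
      have : l = x.1.1 := by omega
      rw [this]
      exact x.2.2
    · intro x y h
      refine ⟨h.1.symm, ?_⟩
      intro l hl
      rw [← h.1]
      exact h.2 l (by tauto)
    · intro x y z hxy hyz
      refine ⟨hxy.1.trans hyz.1, ?_⟩
      intro l hl
      have h2 := hxy.2
      have h3 := hyz.2
      rcases (by omega :
          ((x.1.1 ≤ l ∧ l ≤ y.1.1) ∨ (y.1.1 ≤ l ∧ l ≤ x.1.1)) ∨
          ((y.1.1 ≤ l ∧ l ≤ z.1.1) ∨ (z.1.1 ≤ l ∧ l ≤ y.1.1))) with h | h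
      · exact h2 l h
      · rw [hxy.1]
        exact h3 l h

/-- The vertex set of the graded root `R_τ`. -/
def RootV (T0 : ℕ) (τ : ℕ → ℤ) : Type := Quotient (RootSetoid T0 τ)

/-- The grading `χ_τ` of `R_τ`. -/
def rootχ (T0 : ℕ) (τ : ℕ → ℤ) : RootV T0 τ → ℤ :=
  Quotient.lift (fun x : RootVpre T0 τ => x.1.2) (fun _ _ h => h.1)

/-- The vertex `v_i^{k+1}` above `v_i^k`. -/
def rootStep (T0 : ℕ) (τ : ℕ → ℤ) (x : RootVpre T0 τ) : RootVpre T0 τ :=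
  ⟨(x.1.1, x.1.2 + 1), x.2.1, by show τ x.1.1 ≤ x.1.2 + 1; have := x.2.2; omega⟩

/-- The edges of `R_τ`: each `v_i^k` is connected with `v_i^{k+1}`. -/
def rootAdj (T0 : ℕ) (τ : ℕ → ℤ) (u v : RootV T0 τ) : Prop :=
  (∃ x, u = Quotient.mk (RootSetoid T0 τ) x ∧
        v = Quotient.mk (RootSetoid T0 τ) (rootStep T0 τ x)) ∨
  (∃ x, v = Quotient.mk (RootSetoid T0 τ) x ∧
        u = Quotient.mk (RootSetoid T0 τ) (rootStep T0 τ x))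

/-- A vertex of `R_τ` (given `i ≤ T₀` and `τ i ≤ k`). -/
def rootMk (T0 : ℕ) (τ : ℕ → ℤ) (i : ℕ) (k : ℤ) (hi : i ≤ T0) (hk : τ i ≤ k) :
    RootV T0 τ :=
  Quotient.mk (RootSetoid T0 τ) ⟨(i, k), hi, hk⟩

/-- A local minimum point of a χ-graded graph. -/
def IsLocMin {V : Type} (Adj : V → V → Prop) (χ : V → ℤ) (v : V) : Prop :=
  ∀ w, Adj v w → χ v < χ w

end

noncomputable section

/-- The delta-invariant `δ = #(ℕ∖Γ)` of a numerical semigroup `Γ`. -/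
def sdelta (Γ : Set ℕ) : ℕ := Γᶜ.ncard

/-- `α_i = #{k ∈ ℕ∖Γ : k > i}`. -/
def salpha (Γ : Set ℕ) (i : ℕ) : ℕ := {k : ℕ | k ∉ Γ ∧ i < k}.ncard

/-- `τ_a(2t) = t(1−δ) + Σ_{j=0}^{t−1} ⌊(jp+a)/q⌋`. -/
def tauEven (Γ : Set ℕ) (p q a : ℕ) (t : ℕ) : ℤ :=
  (t : ℤ) * (1 - (sdelta Γ : ℤ)) + ∑ j ∈ Finset.range t, (((j * p + a) / q : ℕ) : ℤ)

/-- The function `τ_a : {0,1,…,2t_a+2} → ℤ`: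
`τ_a(2t)` as above and `τ_a(2t+1) = τ_a(2t+2) + α_{⌊(tp+a)/q⌋}`. -/
def tauFun (Γ : Set ℕ) (p q a : ℕ) (n : ℕ) : ℤ :=
  if n % 2 = 0 then tauEven Γ p q a (n / 2)
  else tauEven Γ p q a (n / 2 + 1) + (salpha Γ ((n / 2 * p + a) / q) : ℤ)

/-- `t_a = ⌊((2δ−1)q − a − 1)/p⌋`. -/
def tA (Γ : Set ℕ) (p q a : ℕ) : ℤ :=
  ((2 * (sdelta Γ : ℤ) - 1) * (q : ℤ) - (a : ℤ) - 1) / (p : ℤ)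

/-- The length `T₀ = 2t_a + 2` of the domain of `τ_a`. -/
def rootT0 (Γ : Set ℕ) (p q a : ℕ) : ℕ := (2 * tA Γ p q a + 2).toNat

end

section Helpers

lemma shiftPow_apply (n : ℕ) (f : TPlus) (h : ℕ) : ((shiftU ^ n) f) h = f (h + n) := by
  induction n generalizing f h with
  | zero => rfl
  | succ k ih =>
    rw [pow_succ, Module.End.mul_apply, ih, shiftU_apply, Nat.add_assoc]

lemma shiftPow_add (a b : ℕ) (f : TPlus) :
    (shiftU ^ a) ((shiftU ^ b) f) = (shiftU ^ (a + b)) f := by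
  ext h
  rw [shiftPow_apply, shiftPow_apply, shiftPow_apply, Nat.add_assoc]

end Helpers

section SymSg

open Finset

variable {Γ : Set ℕ}

lemma sdelta_card (hfin : Γᶜ.Finite) : sdelta Γ = hfin.toFinset.card := by
  rw [sdelta, Set.ncard_eq_toFinset_card _ hfin]

lemma salpha_card (hfin : Γᶜ.Finite) (i : ℕ) :
    salpha Γ i = (hfin.toFinset.filter (fun k => i < k)).card := by
  classical
  rw [salpha, show {k : ℕ | k ∉ Γ ∧ i < k} = ↑(hfin.toFinset.filter (fun k => i < k)) from ?_,
    Set.ncard_coe_finset]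
  ext k
  simp [Set.Finite.mem_toFinset]

variable (hfin : Γᶜ.Finite) (hδ1 : 1 ≤ sdelta Γ)
    (hsym : ∀ k : ℕ, k ≤ 2 * sdelta Γ - 1 → (k ∈ Γ ↔ (2 * sdelta Γ - 1 - k) ∉ Γ))

include hfin hδ1 hsym

lemma gaps_lt : ∀ k, k ∉ Γ → k < 2 * sdelta Γ := by
  classical
  set δ := sdelta Γ with hδ
  intro k hk
  have hA : ((range (2*δ)).filter (fun k => k ∉ Γ)).card
      = ((range (2*δ)).filter (fun k => k ∈ Γ)).card := by
    apply Finset.card_nbij' (fun k => 2*δ - 1 - k) (fun k => 2*δ - 1 - k)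
    · intro a ha
      simp only [Finset.mem_coe, mem_filter, mem_range] at ha ⊢
      refine ⟨by omega, ?_⟩
      by_contra hng
      exact ha.2 ((hsym a (by omega)).mpr hng)
    · intro a ha
      simp only [Finset.mem_coe, mem_filter, mem_range] at ha ⊢
      exact ⟨by omega, (hsym a (by omega)).mp ha.2⟩
    · intro a ha
      simp only [Finset.mem_coe, mem_filter, mem_range] at ha ⊢
      omega
    · intro a ha
      simp only [Finset.mem_coe, mem_filter, mem_range] at ha ⊢
      omega
  have hsum := Finset.card_filter_add_card_filter_not
    (s := range (2*δ)) (p := fun k => k ∉ Γ)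
  simp only [not_not, card_range] at hsum
  have hAG : (range (2*δ)).filter (fun k => k ∉ Γ) ⊆ hfin.toFinset := by
    intro a ha
    simp only [mem_filter] at ha
    simp [Set.Finite.mem_toFinset, ha.2]
  have hGcard : hfin.toFinset.card = δ := (sdelta_card hfin).symm
  have hEq : (range (2*δ)).filter (fun k => k ∉ Γ) = hfin.toFinset :=
    Finset.eq_of_subset_of_card_le hAG (by omega)
  have hkG : k ∈ hfin.toFinset := by simp [Set.Finite.mem_toFinset, hk]
  rw [← hEq] at hkG
  simpa using (Finset.mem_filter.mp hkG).1

lemma alpha_id (i : ℕ) (hi : i ≤ 2 * sdelta Γ - 2) :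
    salpha Γ i + i + 1 = salpha Γ (2 * sdelta Γ - 2 - i) + sdelta Γ := by
  classical
  set δ := sdelta Γ with hδ
  have hGlt : ∀ k ∈ hfin.toFinset, k < 2*δ := fun k hk =>
    gaps_lt hfin hδ1 hsym k (by simpa [Set.Finite.mem_toFinset] using hk)
  have h1 : salpha Γ i + ((hfin.toFinset).filter (fun k => ¬ i < k)).card = δ := by
    rw [salpha_card hfin, Finset.card_filter_add_card_filter_not
      (s := hfin.toFinset) (p := fun k => i < k), ← sdelta_card hfin]
  have h2 : ((hfin.toFinset).filter (fun k => ¬ i < k)).card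
      = ((range (i+1)).filter (fun k => k ∉ Γ)).card := by
    congr 1
    ext k
    simp only [mem_filter, mem_range, Set.Finite.mem_toFinset, Set.mem_compl_iff]
    constructor
    · rintro ⟨h, h'⟩; exact ⟨by omega, h⟩
    · rintro ⟨h, h'⟩; exact ⟨h', by omega⟩
  have h3 : salpha Γ (2*δ-2-i) = ((range (i+1)).filter (fun k => k ∈ Γ)).card := by
    rw [salpha_card hfin]
    apply Finset.card_nbij' (fun k => 2*δ - 1 - k) (fun k => 2*δ - 1 - k)
    · intro a ha
      simp only [Finset.mem_coe, mem_filter, mem_range, Set.Finite.mem_toFinset, Set.mem_compl_iff] at ha ⊢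
      have halt : a < 2*δ := gaps_lt hfin hδ1 hsym a ha.1
      refine ⟨by omega, ?_⟩
      have h := hsym (2*δ-1-a) (by omega)
      have e : 2*δ-1-(2*δ-1-a) = a := by omega
      rw [e] at h
      exact h.mpr ha.1
    · intro a ha
      simp only [Finset.mem_coe, mem_filter, mem_range, Set.Finite.mem_toFinset, Set.mem_compl_iff] at ha ⊢
      refine ⟨(hsym a (by omega)).mp ha.2, by omega⟩
    · intro a ha
      simp only [Finset.mem_coe, mem_filter, mem_range, Set.Finite.mem_toFinset, Set.mem_compl_iff] at ha ⊢
      have halt : a < 2*δ := gaps_lt hfin hδ1 hsym a ha.1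
      omega
    · intro a ha
      simp only [Finset.mem_coe, mem_filter, mem_range] at ha ⊢
      omega
  have h4 := Finset.card_filter_add_card_filter_not
    (s := range (i+1)) (p := fun k => k ∉ Γ)
  simp only [not_not, card_range] at h4
  omega

lemma alpha_sym : ∀ c, c ≤ sdelta Γ - 1 →
    salpha Γ (sdelta Γ - 1 - c) = salpha Γ (sdelta Γ - 1 + c) + c := by
  intro c hc
  have h := alpha_id hfin hδ1 hsym (sdelta Γ - 1 - c) (by omega)
  have e : 2 * sdelta Γ - 2 - (sdelta Γ - 1 - c) = sdelta Γ - 1 + c := by omega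
  rw [e] at h
  omega

lemma alpha_ge (i : ℕ) (hi : i ≤ 2 * sdelta Γ - 2) :
    (sdelta Γ : ℤ) ≤ (salpha Γ i : ℤ) + 1 + i := by
  have h := alpha_id hfin hδ1 hsym i hi
  omega

end SymSg
section Arith

open Finset

/-- `w l = l + ∑_{s<l} ⌊s/q⌋`. -/
def wfun (q l : ℕ) : ℕ := l + ∑ s ∈ Finset.range l, s / q

lemma wfun_succ (q l : ℕ) : wfun q (l+1) = wfun q l + (1 + l / q) := by
  rw [wfun, wfun, Finset.sum_range_succ]
  omega

lemma div_succ_eq (q l : ℕ) (hq : 1 ≤ q) (h : l % q + 1 < q) :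
    (l+1) / q = l / q ∧ (l+1) % q = l % q + 1 := by
  have h1 := Nat.div_add_mod l q
  have e : l + 1 = q * (l / q) + (l % q + 1) := by omega
  rw [e, Nat.mul_add_div (by omega), Nat.mul_add_mod]
  rw [Nat.div_eq_of_lt h, Nat.mod_eq_of_lt h]
  exact ⟨rfl, rfl⟩

lemma div_succ_eq' (q l : ℕ) (hq : 1 ≤ q) (h : l % q + 1 = q) :
    (l+1) / q = l / q + 1 ∧ (l+1) % q = 0 := by
  have h1 := Nat.div_add_mod l q
  have hr : q * (l / q + 1) = q * (l / q) + q := by ring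
  have e : l + 1 = q * (l / q + 1) := by omega
  rw [e, Nat.mul_div_cancel_left _ (by omega), Nat.mul_mod_right]
  exact ⟨rfl, rfl⟩

private lemma key1 (q K M W l : ℤ) (ih : 2*W = (K+1)*(M+l)) :
    2*(W + (1+K)) = (K+1)*((M+1)+(l+1)) := by linear_combination ih

private lemma key2 (q K M W l : ℤ) (hdm : q*K + M = l) (h2 : M+1 = q)
    (ih : 2*W = (K+1)*(M+l)) : 2*(W + (1+K)) = (K+1+1)*(0+(l+1)) := by
  linear_combination ih + hdm + K*h2

lemma two_wfun (q : ℕ) (hq : 1 ≤ q) (l : ℕ) :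
    2 * wfun q l = (l / q + 1) * (l % q + l) := by
  induction l with
  | zero => simp [wfun]
  | succ l ih =>
    rw [wfun_succ]
    have hmodlt : l % q < q := Nat.mod_lt _ (by omega)
    have hdm := Nat.div_add_mod l q
    by_cases hc : l % q + 1 < q
    · obtain ⟨e1, e2⟩ := div_succ_eq q l hq hc
      rw [e1, e2]
      exact_mod_cast key1 (q:ℤ) (l/q : ℕ) (l%q : ℕ) (wfun q l : ℕ) (l:ℕ) (by exact_mod_cast ih)
    · have hc' : l % q + 1 = q := by omega
      obtain ⟨e1, e2⟩ := div_succ_eq' q l hq hc'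
      rw [e1, e2]
      exact_mod_cast key2 (q:ℤ) (l/q : ℕ) (l%q : ℕ) (wfun q l : ℕ) (l:ℕ)
        (by exact_mod_cast hdm) (by exact_mod_cast hc') (by exact_mod_cast ih)

/-- `m t = τ(2t)`, the value of the even part of the tau function. -/
noncomputable def emm (Γ : Set ℕ) (q t : ℕ) : ℤ := tauEven Γ 1 q 0 t

lemma emm_succ (Γ : Set ℕ) (q t : ℕ) :
    emm Γ q (t+1) = emm Γ q t + 1 - (sdelta Γ : ℤ) + ((t / q : ℕ) : ℤ) := by
  rw [emm, emm, tauEven, tauEven, Finset.sum_range_succ]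
  rw [Nat.mul_one, Nat.add_zero]
  push_cast
  ring

lemma tau_even (Γ : Set ℕ) (q t : ℕ) : tauFun Γ 1 q 0 (2*t) = emm Γ q t := by
  rw [tauFun, if_pos (by omega), Nat.mul_div_cancel_left _ (by norm_num), emm]

lemma tau_odd (Γ : Set ℕ) (q t : ℕ) :
    tauFun Γ 1 q 0 (2*t+1) = emm Γ q (t+1) + (salpha Γ (t/q) : ℤ) := by
  rw [tauFun, if_neg (by omega)]
  have h1 : (2*t+1)/2 = t := by omega
  rw [h1, emm, Nat.mul_one, Nat.add_zero]
  norm_num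

section mvals

variable (Γ : Set ℕ) (q : ℕ) (hq : 1 ≤ q) (hδ1 : 1 ≤ sdelta Γ)

include hq hδ1

lemma m_plateau (l : ℕ) (hl : l ≤ q) :
    emm Γ q ((sdelta Γ - 1)*q + l) = emm Γ q ((sdelta Γ - 1)*q) := by
  induction l with
  | zero => rfl
  | succ l ih =>
    have hl' : l < q := by omega
    have hdiv : ((sdelta Γ - 1)*q + l) / q = (sdelta Γ - 1) + l / q := by
      rw [show (sdelta Γ - 1)*q + l = l + (sdelta Γ - 1)*q by ring,
        Nat.add_mul_div_right _ _ (by omega)]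
      omega
    have hstep := emm_succ Γ q ((sdelta Γ - 1)*q + l)
    rw [show (sdelta Γ - 1)*q + (l+1) = ((sdelta Γ - 1)*q + l) + 1 by ring, hstep, hdiv,
      Nat.div_eq_of_lt hl', ih (by omega)]
    have hc : (((sdelta Γ - 1) + 0 : ℕ) : ℤ) = (sdelta Γ : ℤ) - 1 := by omega
    rw [hc]
    ring

lemma m_right (l : ℕ) :
    emm Γ q ((sdelta Γ - 1)*q + q + l) = emm Γ q ((sdelta Γ - 1)*q) + (wfun q l : ℤ) := by
  induction l with
  | zero =>
    rw [show (sdelta Γ - 1)*q + q + 0 = (sdelta Γ - 1)*q + q by ring,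
      m_plateau Γ q hq hδ1 q le_rfl]
    simp [wfun]
  | succ l ih =>
    have hdiv : ((sdelta Γ - 1)*q + q + l) / q = sdelta Γ + l / q := by
      rw [show (sdelta Γ - 1)*q + q + l = l + sdelta Γ * q by
        have h1 : (sdelta Γ - 1) * q + q = ((sdelta Γ - 1) + 1) * q := by ring
        have h2 : sdelta Γ - 1 + 1 = sdelta Γ := by omega
        rw [h1, h2]
        ring]
      rw [Nat.add_mul_div_right _ _ (by omega)]
      omega
    have hstep := emm_succ Γ q ((sdelta Γ - 1)*q + q + l)
    rw [show (sdelta Γ - 1)*q + q + (l+1) = ((sdelta Γ - 1)*q + q + l) + 1 by ring, hstep,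
      hdiv, ih, wfun_succ]
    push_cast
    ring

lemma m_left (l : ℕ) (hl : l ≤ (sdelta Γ - 1)*q) :
    emm Γ q ((sdelta Γ - 1)*q - l) = emm Γ q ((sdelta Γ - 1)*q) + (wfun q l : ℤ) := by
  induction l with
  | zero => simp [wfun]
  | succ l ih =>
    have hql : (l / q) * q ≤ l := Nat.div_mul_le_self l q
    have hdml := Nat.div_add_mod l q
    have hmodlt : l % q < q := Nat.mod_lt _ (by omega)
    have hkle : l / q ≤ sdelta Γ - 2 := by
      by_contra hcon
      have h1 : sdelta Γ - 1 ≤ l / q := by omega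
      have h2 : (sdelta Γ - 1) * q ≤ (l / q) * q := Nat.mul_le_mul_right _ h1
      omega
    have hδge2 : 2 ≤ sdelta Γ := by
      by_contra hcon
      have h0 : sdelta Γ - 1 = 0 := by omega
      rw [h0, Nat.zero_mul] at hl
      omega
    obtain ⟨kk, hδ2⟩ : ∃ kk, sdelta Γ - 1 = l / q + kk + 1 := ⟨sdelta Γ - 2 - l / q, by omega⟩
    have hexp : ((sdelta Γ - 1)) * q = q * (l / q) + q * kk + q := by
      rw [hδ2]; ring
    have hsub : (sdelta Γ - 1)*q - (l+1) = q * kk + (q - 1 - l % q) := by omega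
    have hdiv : ((sdelta Γ - 1)*q - (l+1)) / q = kk := by
      rw [hsub, Nat.mul_add_div (by omega), Nat.div_eq_of_lt (by omega)]
      omega
    have hstep := emm_succ Γ q ((sdelta Γ - 1)*q - (l+1))
    have hbl : (sdelta Γ - 1)*q - (l+1) + 1 = (sdelta Γ - 1)*q - l := by omega
    rw [hbl, hdiv] at hstep
    have hihl := ih (by omega)
    have hws := wfun_succ q l
    omega

lemma two_m_base :
    2 * emm Γ q ((sdelta Γ - 1)*q) + (sdelta Γ : ℤ) * (((sdelta Γ - 1)*q : ℕ) : ℤ) = 0 := by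
  have hdiv : ((sdelta Γ - 1)*q) / q = sdelta Γ - 1 := Nat.mul_div_cancel _ (by omega)
  have hmod : ((sdelta Γ - 1)*q) % q = 0 := Nat.mul_mod_left _ _
  have hw := two_wfun q hq ((sdelta Γ - 1)*q)
  rw [hdiv, hmod] at hw
  have hw2 : 2 * wfun q ((sdelta Γ - 1)*q) = sdelta Γ * ((sdelta Γ - 1)*q) := by
    rw [hw]
    have h2 : sdelta Γ - 1 + 1 = sdelta Γ := by omega
    rw [h2, Nat.zero_add]
  have hcast : (2 : ℤ) * (wfun q ((sdelta Γ - 1)*q) : ℤ)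
      = (sdelta Γ : ℤ) * (((sdelta Γ - 1)*q : ℕ) : ℤ) := by exact_mod_cast hw2
  have hsum : (wfun q ((sdelta Γ - 1)*q) : ℤ)
      = (((sdelta Γ - 1)*q : ℕ) : ℤ) + ∑ s ∈ Finset.range ((sdelta Γ - 1)*q), ((s / q : ℕ) : ℤ) := by
    rw [wfun, Nat.cast_add, Nat.cast_sum]
  have hm : emm Γ q ((sdelta Γ - 1)*q) = (((sdelta Γ - 1)*q : ℕ) : ℤ) * (1 - (sdelta Γ : ℤ))
      + ∑ s ∈ Finset.range ((sdelta Γ - 1)*q), ((s / q : ℕ) : ℤ) := by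
    rw [emm, tauEven]
    congr 1
    apply Finset.sum_congr rfl
    intro j _
    rw [Nat.mul_one, Nat.add_zero]
  linear_combination 2*hm - 2*hsum + hcast

end mvals

lemma tA_val (Γ : Set ℕ) (q : ℕ) (hq : 1 ≤ q) (hδ1 : 1 ≤ sdelta Γ) :
    tA Γ 1 q 0 = (2 * (sdelta Γ : ℤ) - 1) * (q : ℤ) - 1 := by
  rw [tA]
  push_cast
  rw [Int.ediv_one]
  ring

lemma T_val (Γ : Set ℕ) (q : ℕ) (hq : 1 ≤ q) (hδ1 : 1 ≤ sdelta Γ) :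
    rootT0 Γ 1 q 0 = 2 * ((2 * sdelta Γ - 1) * q) := by
  rw [rootT0, tA_val Γ q hq hδ1]
  have hc : ((2 * sdelta Γ - 1 : ℕ) : ℤ) = 2 * (sdelta Γ : ℤ) - 1 := by omega
  have h2 : 2 * ((2 * (sdelta Γ : ℤ) - 1) * (q : ℤ) - 1) + 2
      = ((2 * ((2 * sdelta Γ - 1) * q) : ℕ) : ℤ) := by
    push_cast [hc]
    ring
  rw [h2, Int.toNat_natCast]

end Arith
section RootPart

/-- The index of the even branch containing branch `i`: `ev i = ⌈i/2⌉`. -/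
def evIdx (i : ℕ) : ℕ := (i+1)/2

lemma evIdx_two (t : ℕ) : evIdx (2*t) = t := by rw [evIdx]; omega

variable {T : ℕ} {τ : ℕ → ℤ} {N : ℕ}

lemma rootχ_mkq (x : RootVpre T τ) :
    rootχ T τ (Quotient.mk (RootSetoid T τ) x) = x.1.2 := rfl

lemma rootχ_mk (i : ℕ) (k : ℤ) (hi : i ≤ T) (hk : τ i ≤ k) :
    rootχ T τ (rootMk T τ i k hi hk) = k := rfl

lemma rootMk_congr {i i' : ℕ} {k k' : ℤ} (h : i = i') (h2 : k = k')
    {hi : i ≤ T} {hk : τ i ≤ k} {hi' : i' ≤ T} {hk' : τ i' ≤ k'} :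
    rootMk T τ i k hi hk = rootMk T τ i' k' hi' hk' := by
  subst h; subst h2; rfl

lemma mk_eq_mk {i j : ℕ} {k : ℤ} {hi : i ≤ T} {hj : j ≤ T} {hki : τ i ≤ k} {hkj : τ j ≤ k}
    (hbet : ∀ l : ℕ, ((i ≤ l ∧ l ≤ j) ∨ (j ≤ l ∧ l ≤ i)) → τ l ≤ k) :
    rootMk T τ i k hi hki = rootMk T τ j k hj hkj :=
  Quotient.sound ⟨rfl, hbet⟩

lemma Hmod_step {φ : RootV T τ → TPlus} (hφ : φ ∈ Hmod (rootAdj T τ) (rootχ T τ))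
    (i : ℕ) (k : ℤ) (hi : i ≤ T) (hk : τ i ≤ k) :
    φ (rootMk T τ i (k+1) hi (by omega)) = shiftU (φ (rootMk T τ i k hi hk)) := by
  refine (mem_Hmod.1 hφ (rootMk T τ i k hi hk) (rootMk T τ i (k+1) hi (by omega)) ?_ ?_).symm
  · exact Or.inl ⟨⟨(i,k), hi, hk⟩, rfl, rfl⟩
  · rw [rootχ_mk, rootχ_mk]; omega

lemma Hmod_iter {φ : RootV T τ → TPlus} (hφ : φ ∈ Hmod (rootAdj T τ) (rootχ T τ))
    (i : ℕ) (k : ℤ) (hi : i ≤ T) (hk : τ i ≤ k) (n : ℕ) :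
    φ (rootMk T τ i (k+n) hi (by omega)) = (shiftU ^ n) (φ (rootMk T τ i k hi hk)) := by
  induction n with
  | zero =>
    rw [pow_zero, Module.End.one_apply, rootMk_congr rfl (by omega : k + ((0:ℕ):ℤ) = k)]
  | succ n ih =>
    rw [rootMk_congr rfl (by push_cast; ring : k + ((n+1:ℕ):ℤ) = (k + (n:ℕ)) + 1),
      Hmod_step hφ i (k + (n:ℕ)) hi (by omega), ih, ← Module.End.mul_apply, ← pow_succ']
    all_goals omega

variable (hT : T = 2*N) (hup : ∀ t, t < N → τ (2*t) ≤ τ (2*t+1) ∧ τ (2*t+2) ≤ τ (2*t+1))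

include hT hup

lemma tau_ev_le (i : ℕ) (hi : i ≤ T) (k : ℤ) (hk : τ i ≤ k) :
    τ (2 * evIdx i) ≤ k ∧ 2 * evIdx i ≤ T := by
  rcases Nat.even_or_odd i with ⟨t, ht⟩ | ⟨t, ht⟩
  · have h1 : i = 2*t := by omega
    subst h1
    rw [evIdx_two]
    exact ⟨hk, hi⟩
  · have h1 : i = 2*t+1 := by omega
    subst h1
    have hev : evIdx (2*t+1) = t+1 := by rw [evIdx]; omega
    have htN : t < N := by omega
    rw [hev]
    constructor
    · calc τ (2*(t+1)) = τ (2*t+2) := by norm_num [Nat.mul_succ]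
        _ ≤ τ (2*t+1) := (hup t htN).2
        _ ≤ k := hk
    · omega

end RootPart
section RootPart2

variable (T : ℕ) (τ : ℕ → ℤ) (N : ℕ)

/-- Leaf values of an element of `ℍ`. -/
noncomputable def leafV (hT : T = 2*N) (φ : RootV T τ → TPlus) (t : ℕ) : TPlus :=
  if h : t ≤ N then φ (rootMk T τ (2*t) (τ (2*t)) (by omega) le_rfl) else 0

/-- The compatibility conditions satisfied by a tuple of leaf values. -/
def Cf (f : ℕ → TPlus) : Prop :=
  ∀ t, t < N → ∀ h : ℕ,
    f t (h + (τ (2*t+1) - τ (2*t)).toNat) = f (t+1) (h + (τ (2*t+1) - τ (2*t+2)).toNat)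

variable {T τ N}

lemma Cf_shift {f : ℕ → TPlus} (hf : Cf τ N f) (t : ℕ) (ht : t < N) :
    (shiftU ^ (τ (2*t+1) - τ (2*t)).toNat) (f t)
      = (shiftU ^ (τ (2*t+1) - τ (2*t+2)).toNat) (f (t+1)) := by
  ext h
  rw [shiftPow_apply, shiftPow_apply]
  exact hf t ht h

variable (hT : T = 2*N) (hup : ∀ t, t < N → τ (2*t) ≤ τ (2*t+1) ∧ τ (2*t+2) ≤ τ (2*t+1))

include hup

lemma f_chain {f : ℕ → TPlus} (hf : Cf τ N f) (t t' : ℕ) (htt' : t ≤ t') :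
    t' ≤ N → ∀ k : ℤ, τ (2*t) ≤ k → τ (2*t') ≤ k →
      (∀ s, t ≤ s → s < t' → τ (2*s+1) ≤ k) →
      (shiftU ^ (k - τ (2*t)).toNat) (f t) = (shiftU ^ (k - τ (2*t')).toNat) (f t') := by
  induction t' , htt' using Nat.le_induction with
  | base => intro _ k _ _ _; rfl
  | succ n hn ih =>
    intro hN k hk hk' hbet
    have hnN : n < N := by omega
    have hM : τ (2*n+1) ≤ k := hbet n hn (by omega)
    have h2n : τ (2*n) ≤ k := le_trans (hup n hnN).1 hM
    rw [ih (by omega) k hk h2n (fun s hs hs' => hbet s hs (by omega))]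
    have hstep := Cf_shift hf n hnN
    calc (shiftU ^ (k - τ (2*n)).toNat) (f n)
        = (shiftU ^ ((k - τ (2*n+1)).toNat + (τ (2*n+1) - τ (2*n)).toNat)) (f n) := by
          rw [show (k - τ (2*n)).toNat
              = (k - τ (2*n+1)).toNat + (τ (2*n+1) - τ (2*n)).toNat from by
            have := (hup n hnN).1
            omega]
      _ = (shiftU ^ (k - τ (2*n+1)).toNat) ((shiftU ^ (τ (2*n+1) - τ (2*n)).toNat) (f n)) :=
          (shiftPow_add _ _ _).symm
      _ = (shiftU ^ (k - τ (2*n+1)).toNat) ((shiftU ^ (τ (2*n+1) - τ (2*n+2)).toNat) (f (n+1))) := by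
          rw [hstep]
      _ = (shiftU ^ ((k - τ (2*n+1)).toNat + (τ (2*n+1) - τ (2*n+2)).toNat)) (f (n+1)) :=
          shiftPow_add _ _ _
      _ = (shiftU ^ (k - τ (2*(n+1))).toNat) (f (n+1)) := by
          have h1 : 2*(n+1) = 2*n+2 := by ring
          rw [h1, show (k - τ (2*n+2)).toNat
              = (k - τ (2*n+1)).toNat + (τ (2*n+1) - τ (2*n+2)).toNat from by
            have h2 := (hup n hnN).2
            omega]

include hT

lemma wd_aux {f : ℕ → TPlus} (hf : Cf τ N f) (i j : ℕ) (k : ℤ) (hij : i ≤ j) (hjT : j ≤ T)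
    (hki : τ i ≤ k) (hkj : τ j ≤ k) (hbet : ∀ l, i ≤ l → l ≤ j → τ l ≤ k) :
    (shiftU ^ (k - τ (2*evIdx i)).toNat) (f (evIdx i))
      = (shiftU ^ (k - τ (2*evIdx j)).toNat) (f (evIdx j)) := by
  have hiT : i ≤ T := le_trans hij hjT
  have h1 := tau_ev_le hT hup i hiT k hki
  have h2 := tau_ev_le hT hup j hjT k hkj
  refine f_chain hup hf (evIdx i) (evIdx j) ?_ ?_ k h1.1 h2.1 ?_
  · simp only [evIdx]; omega
  · have := h2.2; omega
  · intro s hs hs'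
    simp only [evIdx] at hs hs'
    exact hbet (2*s+1) (by omega) (by omega)

/-- Reconstruction of an element of `ℍ` from a compatible tuple of leaf values. -/
noncomputable def philift (f : ℕ → TPlus) (hf : Cf τ N f) : RootV T τ → TPlus :=
  Quotient.lift
    (fun x : RootVpre T τ => (shiftU ^ (x.1.2 - τ (2*evIdx x.1.1)).toNat) (f (evIdx x.1.1)))
    (by
      rintro ⟨⟨i,ki⟩,hi,hki⟩ ⟨⟨j,kj⟩,hj,hkj⟩ ⟨hk, hbet⟩
      dsimp only at hk hbet ⊢
      subst hk
      rcases le_total i j with h | h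
      · exact wd_aux hT hup hf i j ki h hj hki hkj (fun l h1 h2 => hbet l (Or.inl ⟨h1, h2⟩))
      · exact (wd_aux hT hup hf j i ki h hi hkj hki
          (fun l h1 h2 => hbet l (Or.inr ⟨h1, h2⟩))).symm)

lemma philift_mk (f : ℕ → TPlus) (hf : Cf τ N f) (x : RootVpre T τ) :
    philift hT hup f hf (Quotient.mk (RootSetoid T τ) x)
      = (shiftU ^ (x.1.2 - τ (2*evIdx x.1.1)).toNat) (f (evIdx x.1.1)) := rfl

lemma philift_mem (f : ℕ → TPlus) (hf : Cf τ N f) :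
    philift hT hup f hf ∈ Hmod (rootAdj T τ) (rootχ T τ) := by
  rw [mem_Hmod]
  rintro v w (⟨x, rfl, rfl⟩ | ⟨x, rfl, rfl⟩) hlt
  · obtain ⟨⟨i,k⟩, hi, hk⟩ := x
    erw [philift_mk, philift_mk]
    dsimp only [rootStep]
    have hev := tau_ev_le hT hup i hi k hk
    calc shiftU ((shiftU ^ (k - τ (2*evIdx i)).toNat) (f (evIdx i)))
        = (shiftU ^ 1) ((shiftU ^ (k - τ (2*evIdx i)).toNat) (f (evIdx i))) := by rw [pow_one]
      _ = (shiftU ^ (1 + (k - τ (2*evIdx i)).toNat)) (f (evIdx i)) := shiftPow_add _ _ _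
      _ = (shiftU ^ ((k + 1 - τ (2*evIdx i)).toNat)) (f (evIdx i)) := by
          rw [show 1 + (k - τ (2*evIdx i)).toNat = (k + 1 - τ (2*evIdx i)).toNat from by
            have := hev.1
            omega]
  · rw [rootχ_mkq, rootχ_mkq] at hlt
    dsimp only [rootStep] at hlt
    omega

lemma philift_leafV (f : ℕ → TPlus) (hf : Cf τ N f) (t : ℕ) (ht : t ≤ N) :
    leafV T τ N hT (philift hT hup f hf) t = f t := by
  rw [leafV, dif_pos ht, rootMk]
  erw [philift_mk]
  dsimp only
  rw [evIdx_two]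
  simp

lemma vertex_eq {φ : RootV T τ → TPlus} (hφ : φ ∈ Hmod (rootAdj T τ) (rootχ T τ))
    (x : RootVpre T τ) :
    φ (Quotient.mk (RootSetoid T τ) x)
      = (shiftU ^ (x.1.2 - τ (2*evIdx x.1.1)).toNat) (leafV T τ N hT φ (evIdx x.1.1)) := by
  obtain ⟨⟨i,k⟩, hi, hk⟩ := x
  dsimp only
  have hev := tau_ev_le hT hup i hi k hk
  have hevN : evIdx i ≤ N := by omega
  rw [leafV, dif_pos hevN]
  have hclass : Quotient.mk (RootSetoid T τ) (⟨(i,k), hi, hk⟩ : RootVpre T τ)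
      = rootMk T τ (2*evIdx i) k hev.2 hev.1 := by
    refine mk_eq_mk (hi := hi) (hj := hev.2) (hki := hk) (hkj := hev.1) ?_
    intro l hl
    have hcase : l = i ∨ l = 2*evIdx i := by simp only [evIdx] at hl ⊢; omega
    rcases hcase with rfl | rfl
    · exact hk
    · exact hev.1
  rw [hclass,
    rootMk_congr (rfl : 2*evIdx i = 2*evIdx i)
      (show k = τ (2*evIdx i) + ((k - τ (2*evIdx i)).toNat : ℕ) by omega)
      (hi' := hev.2) (hk' := by omega),
    Hmod_iter hφ (2*evIdx i) (τ (2*evIdx i)) hev.2 le_rfl ((k - τ (2*evIdx i)).toNat)]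

lemma leafV_Cf {φ : RootV T τ → TPlus} (hφ : φ ∈ Hmod (rootAdj T τ) (rootχ T τ)) :
    Cf τ N (leafV T τ N hT φ) := by
  intro t ht h
  have h1 : leafV T τ N hT φ t = φ (rootMk T τ (2*t) (τ (2*t)) (by omega) le_rfl) :=
    dif_pos (by omega)
  have h2 : leafV T τ N hT φ (t+1) = φ (rootMk T τ (2*(t+1)) (τ (2*(t+1))) (by omega) le_rfl) :=
    dif_pos (by omega)
  rw [h1, h2, ← shiftPow_apply, ← shiftPow_apply]
  have key : (shiftU ^ (τ (2*t+1) - τ (2*t)).toNat) (φ (rootMk T τ (2*t) (τ (2*t)) (by omega) le_rfl))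
      = (shiftU ^ (τ (2*t+1) - τ (2*t+2)).toNat)
          (φ (rootMk T τ (2*(t+1)) (τ (2*(t+1))) (by omega) le_rfl)) := by
    have e1 := Hmod_iter hφ (2*t) (τ (2*t)) (by omega) le_rfl ((τ (2*t+1) - τ (2*t)).toNat)
    have e2 := Hmod_iter hφ (2*(t+1)) (τ (2*(t+1))) (by omega) le_rfl
      ((τ (2*t+1) - τ (2*t+2)).toNat)
    rw [← e1, ← e2]
    have h22 : 2*(t+1) = 2*t+2 := by ring
    have hu := hup t ht
    rw [rootMk_congr (rfl : 2*t = 2*t)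
        (show τ (2*t) + ((τ (2*t+1) - τ (2*t)).toNat : ℕ) = τ (2*t+1) by omega)
        (hi' := by omega) (hk' := hu.1),
      rootMk_congr h22
        (show τ (2*(t+1)) + ((τ (2*t+1) - τ (2*t+2)).toNat : ℕ) = τ (2*t+1) by rw [h22]; omega)
        (hi' := by omega) (hk' := hu.2)]
    refine congrArg φ (mk_eq_mk (hi := by omega) (hj := by omega) (hki := hu.1) (hkj := hu.2) ?_)
    intro l hl
    have hcase : l = 2*t ∨ l = 2*t+1 ∨ l = 2*t+2 := by omega
    rcases hcase with rfl | rfl | rfl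
    · exact hu.1
    · exact le_rfl
    · exact hu.2
  exact DFunLike.congr_fun key h

end RootPart2
section Bridge

/-- The constraint at a single junction. -/
def CfAt (τ : ℕ → ℤ) (t : ℕ) (f : ℕ → TPlus) : Prop :=
  ∀ h : ℕ, f t (h + (τ (2*t+1) - τ (2*t)).toNat) = f (t+1) (h + (τ (2*t+1) - τ (2*t+2)).toNat)

lemma Cf_iff_At {τ : ℕ → ℤ} {N : ℕ} {f : ℕ → TPlus} :
    Cf τ N f ↔ ∀ t, t < N → CfAt τ t f := Iff.rfl

lemma div_sub (q : ℕ) (hq : 1 ≤ q) (D l : ℕ) (hl : l + 1 ≤ D * q) :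
    (D*q - (l+1))/q = D - 1 - l/q := by
  have hql := Nat.div_add_mod l q
  have hmodlt : l % q < q := Nat.mod_lt _ (by omega)
  have h3 : (l/q)*q ≤ l := Nat.div_mul_le_self l q
  have hkle : l / q ≤ D - 1 := by
    by_contra hcon
    have h1 : D ≤ l / q := by omega
    have h2 : D * q ≤ (l / q) * q := Nat.mul_le_mul_right _ h1
    omega
  have hD1 : 1 ≤ D := by
    by_contra hcon
    have h0 : D = 0 := by omega
    rw [h0, Nat.zero_mul] at hl
    omega
  obtain ⟨kk, hkk⟩ : ∃ kk, D - 1 = l/q + kk := ⟨D-1-l/q, by omega⟩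
  have hexp : D*q = q*(l/q) + q*kk + q := by
    have hD : D = l/q + kk + 1 := by omega
    rw [hD]; ring
  have hsub : D*q - (l+1) = q*kk + (q-1-l%q) := by omega
  rw [hsub, Nat.mul_add_div (by omega), Nat.div_eq_of_lt (by omega)]
  omega

variable (Γ : Set ℕ) (q : ℕ)

variable (hq : 1 ≤ q) (hδ1 : 1 ≤ sdelta Γ) (hfin : Γᶜ.Finite)
    (hsym : ∀ k : ℕ, k ≤ 2 * sdelta Γ - 1 → (k ∈ Γ ↔ (2 * sdelta Γ - 1 - k) ∉ Γ))

include hq hδ1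

lemma div_plateau (j : ℕ) (hj : j < q) : ((sdelta Γ - 1)*q + j)/q = sdelta Γ - 1 := by
  rw [show (sdelta Γ - 1)*q + j = j + (sdelta Γ - 1)*q by ring,
    Nat.add_mul_div_right _ _ (by omega), Nat.div_eq_of_lt hj]
  omega

lemma div_right (l' : ℕ) : ((sdelta Γ - 1)*q + q + l')/q = sdelta Γ + l'/q := by
  rw [show (sdelta Γ - 1)*q + q + l' = l' + sdelta Γ * q by
    have h1 : (sdelta Γ - 1) * q + q = ((sdelta Γ - 1) + 1) * q := by ring
    have h2 : sdelta Γ - 1 + 1 = sdelta Γ := by omega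
    rw [h1, h2]; ring]
  rw [Nat.add_mul_div_right _ _ (by omega)]
  omega

lemma div_floor_le (l' D : ℕ) (h : l' < D * q) : l'/q < D := by
  rw [Nat.div_lt_iff_lt_mul (by omega)]
  exact h

lemma EF_plateau (j : ℕ) (hj : j < q) :
    ((tauFun Γ 1 q 0 (2*((sdelta Γ - 1)*q + j)+1)
        - tauFun Γ 1 q 0 (2*((sdelta Γ - 1)*q + j))).toNat = salpha Γ (sdelta Γ - 1))
    ∧ ((tauFun Γ 1 q 0 (2*((sdelta Γ - 1)*q + j)+1)
        - tauFun Γ 1 q 0 (2*((sdelta Γ - 1)*q + j)+2)).toNat = salpha Γ (sdelta Γ - 1)) := by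
  have h2 : 2*((sdelta Γ - 1)*q + j)+2 = 2*(((sdelta Γ - 1)*q + j)+1) := by ring
  rw [tau_odd, tau_even, h2, tau_even, emm_succ, div_plateau Γ q hq hδ1 j hj]
  constructor <;> omega

lemma EF_right (l' : ℕ) :
    ((tauFun Γ 1 q 0 (2*((sdelta Γ - 1)*q + q + l')+1)
        - tauFun Γ 1 q 0 (2*((sdelta Γ - 1)*q + q + l'))).toNat
      = salpha Γ (sdelta Γ + l'/q) + 1 + l'/q)
    ∧ ((tauFun Γ 1 q 0 (2*((sdelta Γ - 1)*q + q + l')+1)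
        - tauFun Γ 1 q 0 (2*((sdelta Γ - 1)*q + q + l')+2)).toNat
      = salpha Γ (sdelta Γ + l'/q)) := by
  have h2 : 2*((sdelta Γ - 1)*q + q + l')+2 = 2*(((sdelta Γ - 1)*q + q + l')+1) := by ring
  rw [tau_odd, tau_even, h2, tau_even, emm_succ, div_right Γ q hq hδ1 l']
  obtain ⟨c, hc⟩ : ∃ c, l'/q = c := ⟨_, rfl⟩
  rw [hc]
  constructor <;> omega

include hfin hsym

lemma EF_left (l' : ℕ) (hl : l' + 1 ≤ (sdelta Γ - 1)*q) :
    ((tauFun Γ 1 q 0 (2*((sdelta Γ - 1)*q - (l'+1))+1)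
        - tauFun Γ 1 q 0 (2*((sdelta Γ - 1)*q - (l'+1)))).toNat
      = salpha Γ (sdelta Γ + l'/q))
    ∧ ((tauFun Γ 1 q 0 (2*((sdelta Γ - 1)*q - (l'+1))+1)
        - tauFun Γ 1 q 0 (2*((sdelta Γ - 1)*q - (l'+1))+2)).toNat
      = salpha Γ (sdelta Γ + l'/q) + 1 + l'/q) := by
  have h2 : 2*((sdelta Γ - 1)*q - (l'+1))+2 = 2*(((sdelta Γ - 1)*q - (l'+1))+1) := by ring
  have hdiv : ((sdelta Γ - 1)*q - (l'+1))/q = sdelta Γ - 2 - l'/q := by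
    have := div_sub q hq (sdelta Γ - 1) l' hl
    rw [this]
    omega
  have hc' : l'/q < sdelta Γ - 1 := div_floor_le Γ q hq hδ1 l' (sdelta Γ - 1) (by omega)
  have halpha := alpha_sym hfin hδ1 hsym (l'/q + 1) (by omega)
  have hidx1 : sdelta Γ - 1 - (l'/q + 1) = sdelta Γ - 2 - l'/q := by omega
  have hidx2 : sdelta Γ - 1 + (l'/q + 1) = sdelta Γ + l'/q := by omega
  rw [hidx1, hidx2] at halpha
  rw [tau_odd, tau_even, h2, tau_even, emm_succ, hdiv]
  obtain ⟨c, hc⟩ : ∃ c, l'/q = c := ⟨_, rfl⟩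
  rw [hc] at halpha hc' ⊢
  constructor <;> omega

lemma hup_main : ∀ t, t < (2*sdelta Γ - 1)*q →
    tauFun Γ 1 q 0 (2*t) ≤ tauFun Γ 1 q 0 (2*t+1)
      ∧ tauFun Γ 1 q 0 (2*t+2) ≤ tauFun Γ 1 q 0 (2*t+1) := by
  intro t ht
  have h2 : 2*t+2 = 2*(t+1) := by ring
  have hdle : t/q < 2*sdelta Γ - 1 := div_floor_le Γ q hq hδ1 t (2*sdelta Γ - 1) ht
  have hge := alpha_ge hfin hδ1 hsym (t/q) (by omega)
  rw [tau_odd, tau_even, h2, tau_even, emm_succ]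
  obtain ⟨c, hc⟩ : ∃ c, t/q = c := ⟨_, rfl⟩
  rw [hc] at hdle hge ⊢
  constructor <;> omega

section consIff

variable {Γ q}
variable (f : ℕ → TPlus)

omit hfin hsym

lemma cfat_plateau_iff (j : ℕ) (hj : j < q) :
    CfAt (tauFun Γ 1 q 0) ((sdelta Γ - 1)*q + j) f
      ↔ ∀ h, salpha Γ (sdelta Γ - 1) ≤ h →
          f ((sdelta Γ - 1)*q + j + 1) h = f ((sdelta Γ - 1)*q + j) h := by
  obtain ⟨hE, hF⟩ := EF_plateau Γ q hq hδ1 j hj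
  constructor
  · intro hc h hh
    have h0 := hc (h - salpha Γ (sdelta Γ - 1))
    rw [hE, hF, show h - salpha Γ (sdelta Γ - 1) + salpha Γ (sdelta Γ - 1) = h from by omega]
      at h0
    exact h0.symm
  · intro hr h
    rw [hE, hF]
    exact (hr (h + salpha Γ (sdelta Γ - 1)) (by omega)).symm

lemma cfat_right_iff (l' : ℕ) :
    CfAt (tauFun Γ 1 q 0) ((sdelta Γ - 1)*q + q + l') f
      ↔ ∀ h, salpha Γ (sdelta Γ + l'/q) ≤ h →
          f ((sdelta Γ - 1)*q + q + l' + 1) h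
            = f ((sdelta Γ - 1)*q + q + l') (h + (l'/q + 1)) := by
  obtain ⟨hE, hF⟩ := EF_right Γ q hq hδ1 l'
  constructor
  · intro hc h hh
    have h0 := hc (h - salpha Γ (sdelta Γ + l'/q))
    rw [hE, hF,
      show h - salpha Γ (sdelta Γ + l'/q) + (salpha Γ (sdelta Γ + l'/q) + 1 + l'/q)
        = h + (l'/q + 1) from by omega,
      show h - salpha Γ (sdelta Γ + l'/q) + salpha Γ (sdelta Γ + l'/q) = h from by omega] at h0
    exact h0.symm
  · intro hr h
    rw [hE, hF]
    have h0 := hr (h + salpha Γ (sdelta Γ + l'/q)) (by omega)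
    rw [show h + salpha Γ (sdelta Γ + l'/q) + (l'/q + 1)
      = h + (salpha Γ (sdelta Γ + l'/q) + 1 + l'/q) from by omega] at h0
    exact h0.symm

include hfin hsym

lemma cfat_left_iff (l' : ℕ) (hl : l' + 1 ≤ (sdelta Γ - 1)*q) :
    CfAt (tauFun Γ 1 q 0) ((sdelta Γ - 1)*q - (l'+1)) f
      ↔ ∀ h, salpha Γ (sdelta Γ + l'/q) ≤ h →
          f ((sdelta Γ - 1)*q - (l'+1)) h
            = f ((sdelta Γ - 1)*q - l') (h + (l'/q + 1)) := by
  obtain ⟨hE, hF⟩ := EF_left Γ q hq hδ1 hfin hsym l' hl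
  have et : (sdelta Γ - 1)*q - (l'+1) + 1 = (sdelta Γ - 1)*q - l' := by omega
  constructor
  · intro hc h hh
    have h0 := hc (h - salpha Γ (sdelta Γ + l'/q))
    rw [hE, hF, et,
      show h - salpha Γ (sdelta Γ + l'/q) + salpha Γ (sdelta Γ + l'/q) = h from by omega,
      show h - salpha Γ (sdelta Γ + l'/q) + (salpha Γ (sdelta Γ + l'/q) + 1 + l'/q)
        = h + (l'/q + 1) from by omega] at h0
    exact h0
  · intro hr h
    rw [hE, hF, et]
    have h0 := hr (h + salpha Γ (sdelta Γ + l'/q)) (by omega)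
    rw [show h + salpha Γ (sdelta Γ + l'/q) + (l'/q + 1)
      = h + (salpha Γ (sdelta Γ + l'/q) + 1 + l'/q) from by omega] at h0
    exact h0

end consIff

omit hfin hsym

lemma m_right_succ (l' : ℕ) :
    emm Γ q ((sdelta Γ - 1)*q + q + (l'+1))
      = emm Γ q ((sdelta Γ - 1)*q + q + l') + (1 + (l'/q : ℕ) : ℤ) := by
  rw [m_right Γ q hq hδ1 (l'+1), m_right Γ q hq hδ1 l', wfun_succ]
  push_cast
  ring

lemma m_left_succ (l' : ℕ) (hl : l' + 1 ≤ (sdelta Γ - 1)*q) :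
    emm Γ q ((sdelta Γ - 1)*q - (l'+1))
      = emm Γ q ((sdelta Γ - 1)*q - l') + (1 + (l'/q : ℕ) : ℤ) := by
  rw [m_left Γ q hq hδ1 (l'+1) hl, m_left Γ q hq hδ1 l' (by omega), wfun_succ]
  push_cast
  ring

lemma len_div_eq (l' : ℕ) : (l' + 1 + q - 1)/q = l'/q + 1 := by
  rw [show l' + 1 + q - 1 = l' + q from by omega, Nat.add_div_right _ (by omega)]

end Bridge
noncomputable section Maps

section LeafLin

variable {T : ℕ} {τ : ℕ → ℤ} {N : ℕ} (hT : T = 2*N)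

lemma leafV_add (φ ψ : RootV T τ → TPlus) (t : ℕ) :
    leafV T τ N hT (φ + ψ) t = leafV T τ N hT φ t + leafV T τ N hT ψ t := by
  rw [leafV, leafV, leafV]
  split_ifs with h
  · rfl
  · simp

lemma leafV_smul (c : ℤ) (φ : RootV T τ → TPlus) (t : ℕ) :
    leafV T τ N hT (c • φ) t = c • leafV T τ N hT φ t := by
  rw [leafV, leafV]
  split_ifs with h
  · rfl
  · simp

lemma leafV_comp (g : TPlus →ₗ[ℤ] TPlus) (φ : RootV T τ → TPlus) (t : ℕ) :
    leafV T τ N hT (fun v => g (φ v)) t = g (leafV T τ N hT φ t) := by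
  rw [leafV, leafV]
  split_ifs with h
  · rfl
  · simp

end LeafLin

lemma shiftU_pow_comm (n : ℕ) (g : TPlus) :
    shiftU ((shiftU ^ n) g) = (shiftU ^ n) (shiftU g) := by
  calc shiftU ((shiftU ^ n) g) = (shiftU ^ 1) ((shiftU ^ n) g) := by rw [pow_one]
    _ = (shiftU ^ (1 + n)) g := shiftPow_add _ _ _
    _ = (shiftU ^ (n + 1)) g := by rw [Nat.add_comm]
    _ = (shiftU ^ n) ((shiftU ^ 1) g) := (shiftPow_add _ _ _).symm
    _ = (shiftU ^ n) (shiftU g) := by rw [pow_one]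

/-- Generic one-sided reconstruction of leaf values from tower elements. -/
def recR (Δ : ℕ → ℕ) (y : ℕ → TPlus) (x : TPlus) : ℕ → TPlus
  | 0 => x
  | (s+1) => y s + (shiftU ^ Δ s) (recR Δ y x s)

@[simp] lemma recR_zero (Δ : ℕ → ℕ) (y : ℕ → TPlus) (x : TPlus) : recR Δ y x 0 = x := rfl

lemma recR_succ (Δ : ℕ → ℕ) (y : ℕ → TPlus) (x : TPlus) (s : ℕ) :
    recR Δ y x (s+1) = y s + (shiftU ^ Δ s) (recR Δ y x s) := rfl

variable (Γ : Set ℕ) (q : ℕ)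

/-- The length function of the target towers. -/
abbrev lenI : (Sum (Fin q) (Fin ((sdelta Γ - 1) * q) × Fin 2)) → ℕ :=
  Sum.elim (fun _ : Fin q => salpha Γ (sdelta Γ - 1))
    (fun x : Fin ((sdelta Γ - 1) * q) × Fin 2 =>
      salpha Γ (sdelta Γ - 1 + (x.1.val + 1 + q - 1) / q))

/-- The leaf of the graded root attached to each tower index. -/
def leafI : (Sum (Fin q) (Fin ((sdelta Γ - 1) * q) × Fin 2)) → ℕ :=
  Sum.elim (fun i => (sdelta Γ - 1)*q + i.val + 1)
    (fun x => if x.2.val = 0 then (sdelta Γ - 1)*q + q + x.1.val + 1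
      else (sdelta Γ - 1)*q - (x.1.val + 1))

/-- The neighbouring leaf (towards the base). -/
def nbI : (Sum (Fin q) (Fin ((sdelta Γ - 1) * q) × Fin 2)) → ℕ :=
  Sum.elim (fun i => (sdelta Γ - 1)*q + i.val)
    (fun x => if x.2.val = 0 then (sdelta Γ - 1)*q + q + x.1.val
      else (sdelta Γ - 1)*q - x.1.val)

/-- The grading shift between neighbouring leaves. -/
def delI : (Sum (Fin q) (Fin ((sdelta Γ - 1) * q) × Fin 2)) → ℕ :=
  Sum.elim (fun _ => 0) (fun x => x.1.val / q + 1)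

variable (hq : 1 ≤ q) (hδ1 : 1 ≤ sdelta Γ) (hfin : Γᶜ.Finite)
    (hsym : ∀ k : ℕ, k ≤ 2 * sdelta Γ - 1 → (k ∈ Γ ↔ (2 * sdelta Γ - 1 - k) ∉ Γ))

include hq hδ1

lemma NN_split : (2*sdelta Γ - 1)*q = (sdelta Γ - 1)*q + q + (sdelta Γ - 1)*q := by
  have h1 : 2*sdelta Γ - 1 = (sdelta Γ - 1) + 1 + (sdelta Γ - 1) := by omega
  rw [h1, Nat.add_mul, Nat.add_mul, Nat.one_mul]

lemma lenI_eq_inr (x : Fin ((sdelta Γ - 1) * q) × Fin 2) :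
    lenI Γ q (Sum.inr x) = salpha Γ (sdelta Γ + x.1.val/q) := by
  have h1 := len_div_eq (Γ := Γ) q hq hδ1 x.1.val
  show salpha Γ (sdelta Γ - 1 + (x.1.val + 1 + q - 1) / q) = _
  rw [h1]
  congr 1
  omega

include hfin hsym

lemma ydiff_mem (f : ℕ → TPlus) (hf : Cf (tauFun Γ 1 q 0) ((2*sdelta Γ - 1)*q) f)
    (i : Sum (Fin q) (Fin ((sdelta Γ - 1) * q) × Fin 2)) :
    (f (leafI Γ q i) - (shiftU ^ delI Γ q i) (f (nbI Γ q i))) ∈ Tower (lenI Γ q i) := by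
  have hNN := NN_split Γ q hq hδ1
  intro h hh
  rcases i with j | ⟨l', ε⟩
  · -- plateau towers
    have ht : (sdelta Γ - 1)*q + j.val < (2*sdelta Γ - 1)*q := by
      have := j.2
      omega
    have hcons := (cfat_plateau_iff hq hδ1 f j.val j.2).mp (hf _ ht) h hh
    show (f ((sdelta Γ - 1)*q + j.val + 1) - (shiftU ^ (0:ℕ)) (f ((sdelta Γ - 1)*q + j.val))) h = 0
    rw [pow_zero, Finsupp.sub_apply]
    rw [Module.End.one_apply]
    rw [hcons]
    ring
  · rw [lenI_eq_inr Γ q hq hδ1] at hh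
    have hl' : l'.val < (sdelta Γ - 1)*q := l'.2
    fin_cases ε
    · -- right towers
      have ht : (sdelta Γ - 1)*q + q + l'.val < (2*sdelta Γ - 1)*q := by omega
      have hcons := (cfat_right_iff hq hδ1 f l'.val).mp (hf _ ht) h hh
      show (f ((sdelta Γ - 1)*q + q + l'.val + 1)
        - (shiftU ^ (l'.val/q + 1)) (f ((sdelta Γ - 1)*q + q + l'.val))) h = 0
      rw [Finsupp.sub_apply, shiftPow_apply, hcons]
      ring
    · -- left towers
      have ht : (sdelta Γ - 1)*q - (l'.val+1) < (2*sdelta Γ - 1)*q := by omega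
      have hcons := (cfat_left_iff hq hδ1 hfin hsym f l'.val (by omega)).mp (hf _ ht) h hh
      show (f ((sdelta Γ - 1)*q - (l'.val + 1))
        - (shiftU ^ (l'.val/q + 1)) (f ((sdelta Γ - 1)*q - l'.val))) h = 0
      rw [Finsupp.sub_apply, shiftPow_apply, hcons]
      ring

end Maps
noncomputable section Reconstruction

variable (Γ : Set ℕ) (q : ℕ)

/-- The left-side tower data, as functions on `ℕ`. -/
def yLf (Y : (i : Sum (Fin q) (Fin ((sdelta Γ - 1) * q) × Fin 2)) → Tower (lenI Γ q i)) :
    ℕ → TPlus := fun u =>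
  if h : u < (sdelta Γ - 1)*q then (Y (Sum.inr (⟨u,h⟩, 1)) : TPlus) else 0

/-- The right-side tower data, as functions on `ℕ`. -/
def yRf (Y : (i : Sum (Fin q) (Fin ((sdelta Γ - 1) * q) × Fin 2)) → Tower (lenI Γ q i)) :
    ℕ → TPlus := fun s =>
  if h : s < q then (Y (Sum.inl ⟨s,h⟩) : TPlus)
  else if h' : s - q < (sdelta Γ - 1)*q then (Y (Sum.inr (⟨s-q,h'⟩, 0)) : TPlus) else 0

/-- Reconstruction of all leaf values from the direct-sum data. -/
def fRec (x : TPlus) (Y : (i : Sum (Fin q) (Fin ((sdelta Γ - 1) * q) × Fin 2)) → Tower (lenI Γ q i))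
    (t : ℕ) : TPlus :=
  if t < (sdelta Γ - 1)*q then recR (fun u => u/q + 1) (yLf Γ q Y) x ((sdelta Γ - 1)*q - t)
  else if t ≤ (2*sdelta Γ - 1)*q then recR (fun s => s/q) (yRf Γ q Y) x (t - (sdelta Γ - 1)*q)
  else 0

variable (hq : 1 ≤ q) (hδ1 : 1 ≤ sdelta Γ)

variable {Γ q}
variable (x : TPlus) (Y : (i : Sum (Fin q) (Fin ((sdelta Γ - 1) * q) × Fin 2)) → Tower (lenI Γ q i))

include hq hδ1

lemma fRec_right (s : ℕ) (hs : (sdelta Γ - 1)*q + s ≤ (2*sdelta Γ - 1)*q) :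
    fRec Γ q x Y ((sdelta Γ - 1)*q + s) = recR (fun s => s/q) (yRf Γ q Y) x s := by
  rw [fRec, if_neg (by omega), if_pos hs, show (sdelta Γ - 1)*q + s - (sdelta Γ - 1)*q = s
    from by omega]

lemma fRec_left (u : ℕ) (hu : u ≤ (sdelta Γ - 1)*q) :
    fRec Γ q x Y ((sdelta Γ - 1)*q - u) = recR (fun u => u/q + 1) (yLf Γ q Y) x u := by
  have hNN := NN_split Γ q hq hδ1
  rcases Nat.eq_zero_or_pos u with rfl | hu0
  · rw [Nat.sub_zero, fRec, if_neg (by omega), if_pos (by omega), Nat.sub_self, recR_zero,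
      recR_zero]
  · rw [fRec, if_pos (by omega), show (sdelta Γ - 1)*q - ((sdelta Γ - 1)*q - u) = u from by omega]

lemma fRec_Cf (hfin : Γᶜ.Finite)
    (hsym : ∀ k : ℕ, k ≤ 2 * sdelta Γ - 1 → (k ∈ Γ ↔ (2 * sdelta Γ - 1 - k) ∉ Γ)) :
    Cf (tauFun Γ 1 q 0) ((2*sdelta Γ - 1)*q) (fRec Γ q x Y) := by
  have hNN := NN_split Γ q hq hδ1
  rw [Cf_iff_At]
  intro t ht
  rcases lt_or_ge t ((sdelta Γ - 1)*q) with hreg | hreg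
  · -- left region
    obtain ⟨l', hl'⟩ : ∃ l', t = (sdelta Γ - 1)*q - (l'+1) ∧ l' + 1 ≤ (sdelta Γ - 1)*q :=
      ⟨(sdelta Γ - 1)*q - t - 1, by omega, by omega⟩
    obtain ⟨rfl, hl1⟩ := hl'
    refine (cfat_left_iff hq hδ1 hfin hsym _ l' hl1).mpr ?_
    intro h hh
    rw [fRec_left hq hδ1 x Y (l'+1) hl1, fRec_left hq hδ1 x Y l' (by omega), recR_succ]
    rw [Finsupp.add_apply, shiftPow_apply]
    have hy : yLf Γ q Y l' h = 0 := by
      rw [yLf, dif_pos (by omega : l' < (sdelta Γ - 1)*q)]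
      refine (Y (Sum.inr (⟨l', by omega⟩, 1))).2 h ?_
      rw [lenI_eq_inr Γ q hq hδ1]
      exact hh
    rw [hy]
    ring
  · rcases lt_or_ge t ((sdelta Γ - 1)*q + q) with hreg2 | hreg2
    · -- plateau region
      obtain ⟨j, rfl, hj⟩ : ∃ j, t = (sdelta Γ - 1)*q + j ∧ j < q := ⟨t - (sdelta Γ - 1)*q,
        by omega, by omega⟩
      refine (cfat_plateau_iff hq hδ1 _ j hj).mpr ?_
      intro h hh
      rw [show (sdelta Γ - 1)*q + j + 1 = (sdelta Γ - 1)*q + (j+1) from by omega,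
        fRec_right hq hδ1 x Y (j+1) (by omega), fRec_right hq hδ1 x Y j (by omega), recR_succ]
      rw [Finsupp.add_apply, shiftPow_apply]
      have hy : yRf Γ q Y j h = 0 := by
        rw [yRf, dif_pos hj]
        exact (Y (Sum.inl ⟨j, hj⟩)).2 h hh
      rw [hy, Nat.div_eq_of_lt hj]
      simp
    · -- right region
      obtain ⟨l', rfl, hl'⟩ : ∃ l', t = (sdelta Γ - 1)*q + q + l' ∧ l' < (sdelta Γ - 1)*q :=
        ⟨t - (sdelta Γ - 1)*q - q, by omega, by omega⟩
      refine (cfat_right_iff hq hδ1 _ l').mpr ?_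
      intro h hh
      rw [show (sdelta Γ - 1)*q + q + l' + 1 = (sdelta Γ - 1)*q + (q + l' + 1) from by omega,
        show (sdelta Γ - 1)*q + q + l' = (sdelta Γ - 1)*q + (q + l') from by omega,
        fRec_right hq hδ1 x Y (q + l' + 1) (by omega), fRec_right hq hδ1 x Y (q + l') (by omega),
        recR_succ]
      rw [Finsupp.add_apply, shiftPow_apply]
      have hy : yRf Γ q Y (q + l') h = 0 := by
        rw [yRf, dif_neg (by omega), dif_pos (by omega : q + l' - q < (sdelta Γ - 1)*q)]
        have hidx : (⟨q + l' - q, by omega⟩ : Fin ((sdelta Γ - 1)*q)) = ⟨l', hl'⟩ := by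
          apply Fin.ext
          simp only
          omega
        rw [hidx]
        refine (Y (Sum.inr (⟨l', hl'⟩, 0))).2 h ?_
        rw [lenI_eq_inr Γ q hq hδ1]
        exact hh
      have hdq : (q + l')/q = l'/q + 1 := by
        rw [show q + l' = l' + q from by omega, Nat.add_div_right _ (by omega)]
      rw [hy, hdq]
      ring

end Reconstruction
noncomputable section EquivCons

variable (Γ : Set ℕ) (q : ℕ) (hq : 1 ≤ q) (hδ1 : 1 ≤ sdelta Γ) (hfin : Γᶜ.Finite)
    (hsym : ∀ k : ℕ, k ≤ 2 * sdelta Γ - 1 → (k ∈ Γ ↔ (2 * sdelta Γ - 1 - k) ∉ Γ))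
    (T : ℕ) (hTN : T = 2*((2*sdelta Γ - 1)*q))

include hq hδ1 hfin hsym

/-- The forward map. -/
def eFwdFun (φ : Hmod (rootAdj T (tauFun Γ 1 q 0)) (rootχ T (tauFun Γ 1 q 0))) :
    Targ (lenI Γ q) :=
  (leafV T (tauFun Γ 1 q 0) ((2*sdelta Γ - 1)*q) hTN φ.1 ((sdelta Γ - 1)*q),
   fun i => ⟨leafV T (tauFun Γ 1 q 0) ((2*sdelta Γ - 1)*q) hTN φ.1 (leafI Γ q i)
       - (shiftU ^ delI Γ q i)
           (leafV T (tauFun Γ 1 q 0) ((2*sdelta Γ - 1)*q) hTN φ.1 (nbI Γ q i)),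
     ydiff_mem Γ q hq hδ1 hfin hsym _
       (leafV_Cf hTN (hup_main Γ q hq hδ1 hfin hsym) φ.2) i⟩)

omit hq hδ1 hfin hsym in
lemma eFwdFun_fst (hq hδ1 hfin hsym)
    (φ : Hmod (rootAdj T (tauFun Γ 1 q 0)) (rootχ T (tauFun Γ 1 q 0))) :
    (eFwdFun Γ q hq hδ1 hfin hsym T hTN φ).1
      = leafV T (tauFun Γ 1 q 0) ((2*sdelta Γ - 1)*q) hTN φ.1 ((sdelta Γ - 1)*q) := rfl

omit hq hδ1 hfin hsym in
lemma eFwdFun_snd (hq hδ1 hfin hsym)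
    (φ : Hmod (rootAdj T (tauFun Γ 1 q 0)) (rootχ T (tauFun Γ 1 q 0)))
    (i : Sum (Fin q) (Fin ((sdelta Γ - 1) * q) × Fin 2)) :
    ((eFwdFun Γ q hq hδ1 hfin hsym T hTN φ).2 i : TPlus)
      = leafV T (tauFun Γ 1 q 0) ((2*sdelta Γ - 1)*q) hTN φ.1 (leafI Γ q i)
        - (shiftU ^ delI Γ q i)
            (leafV T (tauFun Γ 1 q 0) ((2*sdelta Γ - 1)*q) hTN φ.1 (nbI Γ q i)) := rfl

/-- The inverse map. -/
def eInvFun (z : Targ (lenI Γ q)) :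
    Hmod (rootAdj T (tauFun Γ 1 q 0)) (rootχ T (tauFun Γ 1 q 0)) :=
  ⟨philift hTN (hup_main Γ q hq hδ1 hfin hsym) (fRec Γ q z.1 z.2)
      (fRec_Cf hq hδ1 z.1 z.2 hfin hsym),
   philift_mem hTN (hup_main Γ q hq hδ1 hfin hsym) _ _⟩

lemma rec_right_leaf (φ : Hmod (rootAdj T (tauFun Γ 1 q 0)) (rootχ T (tauFun Γ 1 q 0)))
    (s : ℕ) (hs : (sdelta Γ - 1)*q + s ≤ (2*sdelta Γ - 1)*q) :
    recR (fun s => s/q) (yRf Γ q (eFwdFun Γ q hq hδ1 hfin hsym T hTN φ).2)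
        (leafV T (tauFun Γ 1 q 0) ((2*sdelta Γ - 1)*q) hTN φ.1 ((sdelta Γ - 1)*q)) s
      = leafV T (tauFun Γ 1 q 0) ((2*sdelta Γ - 1)*q) hTN φ.1 ((sdelta Γ - 1)*q + s) := by
  induction s with
  | zero => rw [recR_zero, Nat.add_zero]
  | succ s ih =>
    rw [recR_succ, ih (by omega)]
    rcases lt_or_ge s q with hsq | hsq
    · rw [yRf, dif_pos hsq, eFwdFun_snd]
      have hleaf : leafI Γ q (Sum.inl ⟨s, hsq⟩) = (sdelta Γ - 1)*q + s + 1 := rfl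
      have hnb : nbI Γ q (Sum.inl ⟨s, hsq⟩) = (sdelta Γ - 1)*q + s := rfl
      have hdel : delI Γ q (Sum.inl ⟨s, hsq⟩) = 0 := rfl
      rw [hleaf, hnb, hdel, Nat.div_eq_of_lt hsq]
      simp only [pow_zero, Module.End.one_apply]
      rw [sub_add_cancel, show (sdelta Γ - 1)*q + s + 1 = (sdelta Γ - 1)*q + (s+1) from by omega]
    · have hl' : s - q < (sdelta Γ - 1)*q := by
        have hNN := NN_split Γ q hq hδ1
        omega
      rw [yRf, dif_neg (by omega), dif_pos hl', eFwdFun_snd]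
      have hleaf : leafI Γ q (Sum.inr (⟨s - q, hl'⟩, 0)) = (sdelta Γ - 1)*q + q + (s-q) + 1 := rfl
      have hnb : nbI Γ q (Sum.inr (⟨s - q, hl'⟩, 0)) = (sdelta Γ - 1)*q + q + (s-q) := rfl
      have hdel : delI Γ q (Sum.inr (⟨s - q, hl'⟩, 0)) = (s-q)/q + 1 := rfl
      have hdq : (s-q)/q + 1 = s/q := by
        obtain ⟨w, rfl⟩ : ∃ w, s = w + q := ⟨s - q, by omega⟩
        rw [Nat.add_div_right _ (by omega), Nat.add_sub_cancel]
      rw [hleaf, hnb, hdel, hdq,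
        show (sdelta Γ - 1)*q + q + (s-q) + 1 = (sdelta Γ - 1)*q + (s+1) from by omega,
        show (sdelta Γ - 1)*q + q + (s-q) = (sdelta Γ - 1)*q + s from by omega,
        sub_add_cancel]

lemma rec_left_leaf (φ : Hmod (rootAdj T (tauFun Γ 1 q 0)) (rootχ T (tauFun Γ 1 q 0)))
    (u : ℕ) (hu : u ≤ (sdelta Γ - 1)*q) :
    recR (fun u => u/q + 1) (yLf Γ q (eFwdFun Γ q hq hδ1 hfin hsym T hTN φ).2)
        (leafV T (tauFun Γ 1 q 0) ((2*sdelta Γ - 1)*q) hTN φ.1 ((sdelta Γ - 1)*q)) u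
      = leafV T (tauFun Γ 1 q 0) ((2*sdelta Γ - 1)*q) hTN φ.1 ((sdelta Γ - 1)*q - u) := by
  induction u with
  | zero => rw [recR_zero, Nat.sub_zero]
  | succ u ih =>
    rw [recR_succ, ih (by omega)]
    rw [yLf, dif_pos (by omega : u < (sdelta Γ - 1)*q), eFwdFun_snd]
    have hleaf : leafI Γ q (Sum.inr (⟨u, by omega⟩, 1)) = (sdelta Γ - 1)*q - (u + 1) := rfl
    have hnb : nbI Γ q (Sum.inr (⟨u, by omega⟩, 1)) = (sdelta Γ - 1)*q - u := rfl
    have hdel : delI Γ q (Sum.inr (⟨u, by omega⟩, 1)) = u/q + 1 := rfl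
    rw [hleaf, hnb, hdel, sub_add_cancel]

lemma fRec_eFwd (φ : Hmod (rootAdj T (tauFun Γ 1 q 0)) (rootχ T (tauFun Γ 1 q 0))) (t : ℕ) :
    fRec Γ q (eFwdFun Γ q hq hδ1 hfin hsym T hTN φ).1 (eFwdFun Γ q hq hδ1 hfin hsym T hTN φ).2 t
      = leafV T (tauFun Γ 1 q 0) ((2*sdelta Γ - 1)*q) hTN φ.1 t := by
  have hNN := NN_split Γ q hq hδ1
  rcases lt_or_ge t ((sdelta Γ - 1)*q) with hreg | hreg
  · have h1 := fRec_left hq hδ1 (eFwdFun Γ q hq hδ1 hfin hsym T hTN φ).1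
      (eFwdFun Γ q hq hδ1 hfin hsym T hTN φ).2 ((sdelta Γ - 1)*q - t) (by omega)
    rw [show (sdelta Γ - 1)*q - ((sdelta Γ - 1)*q - t) = t from by omega] at h1
    rw [h1, eFwdFun_fst, rec_left_leaf Γ q hq hδ1 hfin hsym T hTN φ _ (by omega),
      show (sdelta Γ - 1)*q - ((sdelta Γ - 1)*q - t) = t from by omega]
  · rcases le_or_gt t ((2*sdelta Γ - 1)*q) with hreg2 | hreg2
    · have h1 := fRec_right hq hδ1 (eFwdFun Γ q hq hδ1 hfin hsym T hTN φ).1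
        (eFwdFun Γ q hq hδ1 hfin hsym T hTN φ).2 (t - (sdelta Γ - 1)*q) (by omega)
      rw [show (sdelta Γ - 1)*q + (t - (sdelta Γ - 1)*q) = t from by omega] at h1
      rw [h1, eFwdFun_fst, rec_right_leaf Γ q hq hδ1 hfin hsym T hTN φ _ (by omega),
        show (sdelta Γ - 1)*q + (t - (sdelta Γ - 1)*q) = t from by omega]
    · rw [fRec, if_neg (by omega), if_neg (by omega), leafV, dif_neg (by omega)]

/-- The graded-root decomposition as a linear equivalence. -/
def eEquiv : (Hmod (rootAdj T (tauFun Γ 1 q 0)) (rootχ T (tauFun Γ 1 q 0)))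
    ≃ₗ[ℤ] Targ (lenI Γ q) where
  toFun := eFwdFun Γ q hq hδ1 hfin hsym T hTN
  invFun := eInvFun Γ q hq hδ1 hfin hsym T hTN
  map_add' φ ψ := by
    refine Prod.ext ?_ ?_
    · show leafV T (tauFun Γ 1 q 0) ((2*sdelta Γ - 1)*q) hTN ((φ + ψ : _)).1 _ = _
      rw [Submodule.coe_add, leafV_add]
      rfl
    · funext i
      apply Subtype.ext
      show leafV T (tauFun Γ 1 q 0) ((2*sdelta Γ - 1)*q) hTN ((φ + ψ : _)).1 _ - _ = _
      rw [Submodule.coe_add, leafV_add, leafV_add]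
      have hV : ((eFwdFun Γ q hq hδ1 hfin hsym T hTN φ
            + eFwdFun Γ q hq hδ1 hfin hsym T hTN ψ).2 i : TPlus)
          = ((eFwdFun Γ q hq hδ1 hfin hsym T hTN φ).2 i : TPlus)
            + ((eFwdFun Γ q hq hδ1 hfin hsym T hTN ψ).2 i : TPlus) := rfl
      rw [hV, eFwdFun_snd, eFwdFun_snd, map_add]
      abel
  map_smul' c φ := by
    refine Prod.ext ?_ ?_
    · show leafV T (tauFun Γ 1 q 0) ((2*sdelta Γ - 1)*q) hTN ((c • φ : _)).1 _ = _
      rw [Submodule.coe_smul, leafV_smul]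
      rfl
    · funext i
      apply Subtype.ext
      show leafV T (tauFun Γ 1 q 0) ((2*sdelta Γ - 1)*q) hTN ((c • φ : _)).1 _ - _ = _
      rw [Submodule.coe_smul, leafV_smul, leafV_smul]
      have hV : (((RingHom.id ℤ) c • eFwdFun Γ q hq hδ1 hfin hsym T hTN φ).2 i : TPlus)
          = c • ((eFwdFun Γ q hq hδ1 hfin hsym T hTN φ).2 i : TPlus) := rfl
      rw [hV, eFwdFun_snd, map_smul, smul_sub]
  left_inv φ := by
    have key : philift hTN (hup_main Γ q hq hδ1 hfin hsym)
        (fRec Γ q (eFwdFun Γ q hq hδ1 hfin hsym T hTN φ).1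
          (eFwdFun Γ q hq hδ1 hfin hsym T hTN φ).2)
        (fRec_Cf hq hδ1 _ _ hfin hsym) = φ.1 := by
      funext v
      induction v using Quotient.ind with
      | _ x =>
        rw [philift_mk, vertex_eq hTN (hup_main Γ q hq hδ1 hfin hsym) φ.2 x]
        exact congrArg _ (fRec_eFwd Γ q hq hδ1 hfin hsym T hTN φ _)
    exact Subtype.ext key
  right_inv z := by
    obtain ⟨x, Y⟩ := z
    have hNN := NN_split Γ q hq hδ1
    have hLf : ∀ t, t ≤ (2*sdelta Γ - 1)*q →
        leafV T (tauFun Γ 1 q 0) ((2*sdelta Γ - 1)*q) hTN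
          (eInvFun Γ q hq hδ1 hfin hsym T hTN (x, Y)).1 t = fRec Γ q x Y t := by
      intro t ht
      exact philift_leafV hTN (hup_main Γ q hq hδ1 hfin hsym) (fRec Γ q x Y)
        (fRec_Cf hq hδ1 x Y hfin hsym) t ht
    refine Prod.ext ?_ ?_
    · rw [eFwdFun_fst, hLf _ (by omega)]
      have h1 := fRec_right hq hδ1 x Y 0 (by omega)
      rw [Nat.add_zero] at h1
      rw [h1, recR_zero]
    · funext i
      apply Subtype.ext
      rw [eFwdFun_snd]
      rcases i with j | ⟨l', ε⟩
      · have hj := j.2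
        have hleaf : leafI Γ q (Sum.inl j) = (sdelta Γ - 1)*q + j.val + 1 := rfl
        have hnb : nbI Γ q (Sum.inl j) = (sdelta Γ - 1)*q + j.val := rfl
        have hdel : delI Γ q (Sum.inl j) = 0 := rfl
        rw [hleaf, hnb, hdel, hLf _ (by omega), hLf _ (by omega),
          show (sdelta Γ - 1)*q + j.val + 1 = (sdelta Γ - 1)*q + (j.val+1) from by omega,
          fRec_right hq hδ1 x Y (j.val+1) (by omega), fRec_right hq hδ1 x Y j.val (by omega),
          recR_succ, yRf, dif_pos hj]
        simp only [Nat.div_eq_of_lt hj, pow_zero, Module.End.one_apply]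
        rw [add_sub_cancel_right]
      · have hl' := l'.2
        rcases ε with ⟨εv, hεv⟩
        interval_cases εv
        · show leafV T (tauFun Γ 1 q 0) ((2*sdelta Γ - 1)*q) hTN _ ((sdelta Γ - 1)*q + q + l'.val + 1)
              - (shiftU ^ (l'.val/q + 1))
                  (leafV T (tauFun Γ 1 q 0) ((2*sdelta Γ - 1)*q) hTN _ ((sdelta Γ - 1)*q + q + l'.val))
            = (Y (Sum.inr (l', ⟨0, hεv⟩)) : TPlus)
          rw [hLf _ (by omega), hLf _ (by omega),
            show (sdelta Γ - 1)*q + q + l'.val + 1 = (sdelta Γ - 1)*q + (q + l'.val + 1)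
              from by omega,
            show (sdelta Γ - 1)*q + q + l'.val = (sdelta Γ - 1)*q + (q + l'.val) from by omega,
            fRec_right hq hδ1 x Y (q + l'.val + 1) (by omega),
            fRec_right hq hδ1 x Y (q + l'.val) (by omega), recR_succ]
          have hdq : (q + l'.val)/q = l'.val/q + 1 := by
            rw [show q + l'.val = l'.val + q from by omega, Nat.add_div_right _ (by omega)]
          rw [hdq, add_sub_cancel_right, yRf, dif_neg (by omega),
            show q + l'.val - q = l'.val from by omega, dif_pos hl']
          rfl
        · show leafV T (tauFun Γ 1 q 0) ((2*sdelta Γ - 1)*q) hTN _ ((sdelta Γ - 1)*q - (l'.val + 1))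
              - (shiftU ^ (l'.val/q + 1))
                  (leafV T (tauFun Γ 1 q 0) ((2*sdelta Γ - 1)*q) hTN _ ((sdelta Γ - 1)*q - l'.val))
            = (Y (Sum.inr (l', ⟨1, hεv⟩)) : TPlus)
          rw [hLf _ (by omega), hLf _ (by omega),
            fRec_left hq hδ1 x Y (l'.val + 1) (by omega), fRec_left hq hδ1 x Y l'.val (by omega),
            recR_succ, add_sub_cancel_right, yLf,
            dif_pos (by omega : l'.val < (sdelta Γ - 1)*q)]
          rfl

end EquivCons
noncomputable section GradePart

variable (Γ : Set ℕ) (q : ℕ) (hq : 1 ≤ q) (hδ1 : 1 ≤ sdelta Γ) (hfin : Γᶜ.Finite)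
    (hsym : ∀ k : ℕ, k ≤ 2 * sdelta Γ - 1 → (k ∈ Γ ↔ (2 * sdelta Γ - 1 - k) ∉ Γ))
    (T : ℕ) (hTN : T = 2*((2*sdelta Γ - 1)*q))

/-- The grading offsets of the towers. -/
def rIfun : (Sum (Fin q) (Fin ((sdelta Γ - 1) * q) × Fin 2)) → ℚ :=
  Sum.elim (fun _ : Fin q => (0 : ℚ))
    (fun x : Fin ((sdelta Γ - 1) * q) × Fin 2 =>
      ((((x.1.val + 1) / q + 1 : ℕ) : ℚ) * (((x.1.val + 1) % q + (x.1.val + 1) : ℕ) : ℚ)))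

include hq hδ1 hfin hsym

lemma eEquiv_U (φ : Hmod (rootAdj T (tauFun Γ 1 q 0)) (rootχ T (tauFun Γ 1 q 0))) :
    eFwdFun Γ q hq hδ1 hfin hsym T hTN
        (HU (rootAdj T (tauFun Γ 1 q 0)) (rootχ T (tauFun Γ 1 q 0)) φ)
      = TargU (lenI Γ q) (eFwdFun Γ q hq hδ1 hfin hsym T hTN φ) := by
  refine Prod.ext ?_ ?_
  · show leafV T (tauFun Γ 1 q 0) ((2*sdelta Γ - 1)*q) hTN (fun v => shiftU (φ.1 v)) _
      = shiftU (leafV T (tauFun Γ 1 q 0) ((2*sdelta Γ - 1)*q) hTN φ.1 _)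
    exact leafV_comp hTN shiftU φ.1 _
  · funext i
    apply Subtype.ext
    show leafV T (tauFun Γ 1 q 0) ((2*sdelta Γ - 1)*q) hTN (fun v => shiftU (φ.1 v)) (leafI Γ q i)
        - (shiftU ^ delI Γ q i)
            (leafV T (tauFun Γ 1 q 0) ((2*sdelta Γ - 1)*q) hTN (fun v => shiftU (φ.1 v)) (nbI Γ q i))
      = shiftU (leafV T (tauFun Γ 1 q 0) ((2*sdelta Γ - 1)*q) hTN φ.1 (leafI Γ q i)
          - (shiftU ^ delI Γ q i)
              (leafV T (tauFun Γ 1 q 0) ((2*sdelta Γ - 1)*q) hTN φ.1 (nbI Γ q i)))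
    rw [leafV_comp hTN shiftU φ.1, leafV_comp hTN shiftU φ.1, map_sub, shiftU_pow_comm]

omit hfin hsym

lemma base_grading :
    2*((emm Γ q ((sdelta Γ - 1)*q)) : ℚ) + (q:ℚ)*(sdelta Γ:ℚ)*((sdelta Γ:ℚ) - 1) = 0 := by
  have h := two_m_base Γ q hq hδ1
  have hc : (((sdelta Γ - 1)*q : ℕ) : ℚ) = ((sdelta Γ:ℚ) - 1) * q := by
    push_cast [Nat.cast_sub hδ1]
    ring
  have h2 : (2:ℚ)*((emm Γ q ((sdelta Γ - 1)*q)) : ℚ)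
      + (sdelta Γ:ℚ) * (((sdelta Γ - 1)*q : ℕ) : ℚ) = 0 := by exact_mod_cast h
  rw [hc] at h2
  linear_combination h2

/-- On each leaf the `m`-value equals the neighbour's plus the shift. -/
lemma mdiff (i : Sum (Fin q) (Fin ((sdelta Γ - 1) * q) × Fin 2)) :
    emm Γ q (leafI Γ q i) = emm Γ q (nbI Γ q i) + (delI Γ q i : ℤ) := by
  rcases i with j | ⟨l', ε⟩
  · have hj := j.2
    have h1 : leafI Γ q (Sum.inl j) = (sdelta Γ - 1)*q + (j.val + 1) := by
      show (sdelta Γ - 1)*q + j.val + 1 = _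
      omega
    have h2 : nbI Γ q (Sum.inl j) = (sdelta Γ - 1)*q + j.val := rfl
    have h3 : delI Γ q (Sum.inl j) = 0 := rfl
    rw [h1, h2, h3, m_plateau Γ q hq hδ1 (j.val+1) (by omega),
      m_plateau Γ q hq hδ1 j.val (by omega)]
    simp
  · have hl' := l'.2
    rcases ε with ⟨εv, hεv⟩
    interval_cases εv
    · have h1 : leafI Γ q (Sum.inr (l', ⟨0, hεv⟩)) = (sdelta Γ - 1)*q + q + (l'.val + 1) := by
        show (sdelta Γ - 1)*q + q + l'.val + 1 = _
        omega
      have h2 : nbI Γ q (Sum.inr (l', ⟨0, hεv⟩)) = (sdelta Γ - 1)*q + q + l'.val := rfl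
      have h3 : delI Γ q (Sum.inr (l', ⟨0, hεv⟩)) = l'.val/q + 1 := rfl
      rw [h1, h2, h3, m_right_succ Γ q hq hδ1 l'.val]
      push_cast
      ring
    · have h1 : leafI Γ q (Sum.inr (l', ⟨1, hεv⟩)) = (sdelta Γ - 1)*q - (l'.val + 1) := rfl
      have h2 : nbI Γ q (Sum.inr (l', ⟨1, hεv⟩)) = (sdelta Γ - 1)*q - l'.val := rfl
      have h3 : delI Γ q (Sum.inr (l', ⟨1, hεv⟩)) = l'.val/q + 1 := rfl
      rw [h1, h2, h3, m_left_succ Γ q hq hδ1 l'.val (by omega)]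
      push_cast
      ring

/-- The grading offsets of the towers equal `2 m(leaf) + r`. -/
lemma gv (i : Sum (Fin q) (Fin ((sdelta Γ - 1) * q) × Fin 2)) :
    rIfun Γ q i = 2*((emm Γ q (leafI Γ q i)) : ℚ)
      + (q:ℚ)*(sdelta Γ:ℚ)*((sdelta Γ:ℚ) - 1) := by
  have hbase := base_grading Γ q hq hδ1
  rcases i with j | ⟨l', ε⟩
  · have hj := j.2
    have h1 : leafI Γ q (Sum.inl j) = (sdelta Γ - 1)*q + (j.val + 1) := by
      show (sdelta Γ - 1)*q + j.val + 1 = _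
      omega
    show (0:ℚ) = _
    rw [h1, m_plateau Γ q hq hδ1 (j.val+1) (by omega)]
    linarith
  · have hl' := l'.2
    have hw := two_wfun q hq (l'.val + 1)
    have hwq : ((2 * wfun q (l'.val+1) : ℕ) : ℚ)
        = (((l'.val + 1) / q + 1 : ℕ) : ℚ) * (((l'.val + 1) % q + (l'.val + 1) : ℕ) : ℚ) := by
      rw [hw]
      push_cast
      ring
    rcases ε with ⟨εv, hεv⟩
    interval_cases εv
    · have h1 : leafI Γ q (Sum.inr (l', ⟨0, hεv⟩)) = (sdelta Γ - 1)*q + q + (l'.val + 1) := by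
        show (sdelta Γ - 1)*q + q + l'.val + 1 = _
        omega
      show (((l'.val + 1) / q + 1 : ℕ) : ℚ) * (((l'.val + 1) % q + (l'.val + 1) : ℕ) : ℚ) = _
      rw [h1, m_right Γ q hq hδ1 (l'.val + 1), ← hwq]
      push_cast
      linarith
    · have h1 : leafI Γ q (Sum.inr (l', ⟨1, hεv⟩)) = (sdelta Γ - 1)*q - (l'.val + 1) := rfl
      show (((l'.val + 1) / q + 1 : ℕ) : ℚ) * (((l'.val + 1) % q + (l'.val + 1) : ℕ) : ℚ) = _
      rw [h1, m_left Γ q hq hδ1 (l'.val + 1) (by omega), ← hwq]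
      push_cast
      linarith

include hfin hsym

/-- Homogeneity of an element of `ℍ` is equivalent to homogeneity of all its leaf values. -/
lemma HH_iff_leaf (d : ℚ) (φ : Hmod (rootAdj T (tauFun Γ 1 q 0)) (rootχ T (tauFun Γ 1 q 0))) :
    HHomog (rootχ T (tauFun Γ 1 q 0)) ((q:ℚ)*(sdelta Γ:ℚ)*((sdelta Γ:ℚ) - 1)) d φ.1
      ↔ ∀ t h, leafV T (tauFun Γ 1 q 0) ((2*sdelta Γ - 1)*q) hTN φ.1 t h ≠ 0 →
          2*(h:ℚ) + (2*((emm Γ q t : ℤ) : ℚ) + (q:ℚ)*(sdelta Γ:ℚ)*((sdelta Γ:ℚ) - 1)) = d := by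
  constructor
  · intro hH t h hne
    by_cases ht : t ≤ (2*sdelta Γ - 1)*q
    · have hL : leafV T (tauFun Γ 1 q 0) ((2*sdelta Γ - 1)*q) hTN φ.1 t
          = φ.1 (rootMk T (tauFun Γ 1 q 0) (2*t) (tauFun Γ 1 q 0 (2*t)) (by omega) le_rfl) :=
        dif_pos ht
      rw [hL] at hne
      have := hH (rootMk T (tauFun Γ 1 q 0) (2*t) (tauFun Γ 1 q 0 (2*t)) (by omega) le_rfl) h hne
      rw [rootχ_mk, tau_even] at this
      exact this
    · rw [leafV, dif_neg ht] at hne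
      exact absurd rfl hne
  · intro hLH v
    induction v using Quotient.ind with
    | _ x =>
      intro h hne
      rw [vertex_eq hTN (hup_main Γ q hq hδ1 hfin hsym) φ.2 x, shiftPow_apply] at hne
      obtain ⟨⟨i, k⟩, hi, hk⟩ := x
      have hev := tau_ev_le hTN (hup_main Γ q hq hδ1 hfin hsym) i hi k hk
      have hτe : tauFun Γ 1 q 0 (2 * evIdx i) = emm Γ q (evIdx i) := tau_even Γ q (evIdx i)
      have hval := hLH (evIdx i) _ hne
      erw [rootχ_mkq]
      have hcast : ((h + (k - tauFun Γ 1 q 0 (2 * evIdx i)).toNat : ℕ) : ℚ)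
          = (h : ℚ) + ((k:ℤ) : ℚ) - ((emm Γ q (evIdx i) : ℤ) : ℚ) := by
        have h1 : ((h + (k - tauFun Γ 1 q 0 (2 * evIdx i)).toNat : ℕ) : ℤ)
            = h + k - emm Γ q (evIdx i) := by
          rw [hτe] at hev ⊢
          push_cast
          omega
        exact_mod_cast congrArg (fun z : ℤ => (z : ℚ)) h1
      rw [hcast] at hval
      show 2*(h:ℚ) + (2*((k:ℤ):ℚ) + _) = d
      linarith

/-- Leaf homogeneity is equivalent to homogeneity in the direct sum. -/
lemma leaf_iff_targ (d : ℚ) (φ : Hmod (rootAdj T (tauFun Γ 1 q 0)) (rootχ T (tauFun Γ 1 q 0))) :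
    (∀ t h, leafV T (tauFun Γ 1 q 0) ((2*sdelta Γ - 1)*q) hTN φ.1 t h ≠ 0 →
        2*(h:ℚ) + (2*((emm Γ q t : ℤ) : ℚ) + (q:ℚ)*(sdelta Γ:ℚ)*((sdelta Γ:ℚ) - 1)) = d)
      ↔ TargHomog 0 (rIfun Γ q) d (eFwdFun Γ q hq hδ1 hfin hsym T hTN φ) := by
  have hNN := NN_split Γ q hq hδ1
  have hbase := base_grading Γ q hq hδ1
  constructor
  · intro hLH
    constructor
    · intro h hne
      rw [eFwdFun_fst] at hne
      have := hLH _ _ hne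
      linarith [hbase]
    · intro i h hne
      rw [eFwdFun_snd, Finsupp.sub_apply, shiftPow_apply] at hne
      have hor : leafV T (tauFun Γ 1 q 0) ((2*sdelta Γ - 1)*q) hTN φ.1 (leafI Γ q i) h ≠ 0
          ∨ leafV T (tauFun Γ 1 q 0) ((2*sdelta Γ - 1)*q) hTN φ.1 (nbI Γ q i)
              (h + delI Γ q i) ≠ 0 := by
        by_contra hcon
        push_neg at hcon
        rw [hcon.1, hcon.2] at hne
        exact hne (by ring)
      rw [gv Γ q hq hδ1 i]
      rcases hor with hne1 | hne1
      · have := hLH _ _ hne1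
        linarith
      · have := hLH _ _ hne1
        have hm := mdiff Γ q hq hδ1 i
        have hmq : ((emm Γ q (leafI Γ q i) : ℤ) : ℚ)
            = ((emm Γ q (nbI Γ q i) : ℤ) : ℚ) + (delI Γ q i : ℚ) := by exact_mod_cast hm
        push_cast at this
        rw [hmq]
        push_cast
        linarith
  · intro hT
    -- leaf homogeneity, by outward induction from the base leaf
    set F := leafV T (tauFun Γ 1 q 0) ((2*sdelta Γ - 1)*q) hTN φ.1 with hF
    have hstep : ∀ i : Sum (Fin q) (Fin ((sdelta Γ - 1) * q) × Fin 2),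
        (∀ h, F (nbI Γ q i) h ≠ 0 →
          2*(h:ℚ) + (2*((emm Γ q (nbI Γ q i) : ℤ) : ℚ)
            + (q:ℚ)*(sdelta Γ:ℚ)*((sdelta Γ:ℚ) - 1)) = d) →
        (∀ h, F (leafI Γ q i) h ≠ 0 →
          2*(h:ℚ) + (2*((emm Γ q (leafI Γ q i) : ℤ) : ℚ)
            + (q:ℚ)*(sdelta Γ:ℚ)*((sdelta Γ:ℚ) - 1)) = d) := by
      intro i hnb h hne
      have hdecomp : F (leafI Γ q i) h
          = ((eFwdFun Γ q hq hδ1 hfin hsym T hTN φ).2 i : TPlus) h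
            + F (nbI Γ q i) (h + delI Γ q i) := by
        rw [eFwdFun_snd, Finsupp.sub_apply, shiftPow_apply, hF]
        ring
      rw [hdecomp] at hne
      have hor : ((eFwdFun Γ q hq hδ1 hfin hsym T hTN φ).2 i : TPlus) h ≠ 0
          ∨ F (nbI Γ q i) (h + delI Γ q i) ≠ 0 := by
        by_contra hcon
        push_neg at hcon
        rw [hcon.1, hcon.2] at hne
        exact hne (by ring)
      rcases hor with hne1 | hne1
      · have := hT.2 i h hne1
        rw [gv Γ q hq hδ1 i] at this
        linarith
      · have := hnb _ hne1
        have hm := mdiff Γ q hq hδ1 i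
        have hmq : ((emm Γ q (leafI Γ q i) : ℤ) : ℚ)
            = ((emm Γ q (nbI Γ q i) : ℤ) : ℚ) + (delI Γ q i : ℚ) := by exact_mod_cast hm
        push_cast at this
        rw [hmq]
        push_cast
        linarith
    have hbaseLH : ∀ h, F ((sdelta Γ - 1)*q) h ≠ 0 →
        2*(h:ℚ) + (2*((emm Γ q ((sdelta Γ - 1)*q) : ℤ) : ℚ)
          + (q:ℚ)*(sdelta Γ:ℚ)*((sdelta Γ:ℚ) - 1)) = d := by
      intro h hne
      have := hT.1 h (by rw [eFwdFun_fst]; exact hne)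
      linarith [hbase]
    have hup' : ∀ s, s ≤ q + (sdelta Γ - 1)*q → ∀ h, F ((sdelta Γ - 1)*q + s) h ≠ 0 →
        2*(h:ℚ) + (2*((emm Γ q ((sdelta Γ - 1)*q + s) : ℤ) : ℚ)
          + (q:ℚ)*(sdelta Γ:ℚ)*((sdelta Γ:ℚ) - 1)) = d := by
      intro s
      induction s with
      | zero =>
        intro _ h hne
        rw [Nat.add_zero] at hne ⊢
        exact hbaseLH h hne
      | succ s ih =>
        intro hs h hne
        rcases lt_or_ge s q with hsq | hsq
        · have h0 := hstep (Sum.inl ⟨s, hsq⟩) (ih (by omega))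
          have he : leafI Γ q (Sum.inl ⟨s, hsq⟩) = (sdelta Γ - 1)*q + (s+1) := by
            show (sdelta Γ - 1)*q + s + 1 = _
            omega
          rw [he] at h0
          exact h0 h hne
        · have hsb : s - q < (sdelta Γ - 1)*q := by omega
          have h0 := hstep (Sum.inr (⟨s - q, hsb⟩, ⟨0, by omega⟩))
          have he : leafI Γ q (Sum.inr (⟨s - q, hsb⟩, ⟨0, by omega⟩))
              = (sdelta Γ - 1)*q + (s+1) := by
            show (sdelta Γ - 1)*q + q + (s - q) + 1 = _
            omega
          have hn : nbI Γ q (Sum.inr (⟨s - q, hsb⟩, ⟨0, by omega⟩))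
              = (sdelta Γ - 1)*q + s := by
            show (sdelta Γ - 1)*q + q + (s - q) = _
            omega
          rw [he, hn] at h0
          exact h0 (ih (by omega)) h hne
    have hdown : ∀ u, u ≤ (sdelta Γ - 1)*q → ∀ h, F ((sdelta Γ - 1)*q - u) h ≠ 0 →
        2*(h:ℚ) + (2*((emm Γ q ((sdelta Γ - 1)*q - u) : ℤ) : ℚ)
          + (q:ℚ)*(sdelta Γ:ℚ)*((sdelta Γ:ℚ) - 1)) = d := by
      intro u
      induction u with
      | zero =>
        intro _ h hne
        rw [Nat.sub_zero] at hne ⊢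
        exact hbaseLH h hne
      | succ u ih =>
        intro hu h hne
        have hub : u < (sdelta Γ - 1)*q := by omega
        have h0 := hstep (Sum.inr (⟨u, hub⟩, ⟨1, by omega⟩))
        have he : leafI Γ q (Sum.inr (⟨u, hub⟩, ⟨1, by omega⟩))
            = (sdelta Γ - 1)*q - (u+1) := rfl
        have hn : nbI Γ q (Sum.inr (⟨u, hub⟩, ⟨1, by omega⟩)) = (sdelta Γ - 1)*q - u := rfl
        rw [he, hn] at h0
        exact h0 (ih (by omega)) h hne
    intro t h hne
    rcases lt_or_ge t ((sdelta Γ - 1)*q) with hreg | hreg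
    · have := hdown ((sdelta Γ - 1)*q - t) (by omega)
      rw [show (sdelta Γ - 1)*q - ((sdelta Γ - 1)*q - t) = t from by omega] at this
      exact this h hne
    · by_cases ht : t ≤ (2*sdelta Γ - 1)*q
      · have := hup' (t - (sdelta Γ - 1)*q) (by omega)
        rw [show (sdelta Γ - 1)*q + (t - (sdelta Γ - 1)*q) = t from by omega] at this
        exact this h hne
      · rw [hF, leafV, dif_neg ht] at hne
        exact absurd rfl hne

end GradePart
/-- (Example 8.2 of the paper: `p = 1`, i.e. `(−1/q)`-surgery.)
With `t_0 = (2δ−1)q − 1` and `r_0 = qδ(δ−1)`, there is an isomorphism of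
graded `ℤ[U]`-modules
`ℍ(R_{τ_0},χ_{τ_0})[qδ(δ−1)] ≅ T⁺_0 ⊕ T_0(α_{δ−1})^{⊕q} ⊕
  ⊕_{l=1}^{(δ−1)q} T_{(⌊l/q⌋+1)((l mod q)+l)}(α_{δ−1+⌈l/q⌉})^{⊕2}`. -/
theorem HF_of_minus_one_over_q_surgery
    (Γ : Set ℕ)
    (h0 : 0 ∈ Γ) (hadd : ∀ x ∈ Γ, ∀ y ∈ Γ, x + y ∈ Γ)
    (hfin : Γᶜ.Finite) (hδ1 : 1 ≤ sdelta Γ)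
    (hsym : ∀ k : ℕ, k ≤ 2 * sdelta Γ - 1 → (k ∈ Γ ↔ (2 * sdelta Γ - 1 - k) ∉ Γ))
    (q : ℕ) (hq : 1 ≤ q)
    (τ : ℕ → ℤ) (hτ : τ = tauFun Γ 1 q 0)
    (T : ℕ) (hT : T = rootT0 Γ 1 q 0) :
    tA Γ 1 q 0 = (2 * (sdelta Γ : ℤ) - 1) * (q : ℤ) - 1
      ∧ ∃ e : Hmod (rootAdj T τ) (rootχ T τ) ≃ₗ[ℤ]
            Targ (Sum.elim (fun _ : Fin q => salpha Γ (sdelta Γ - 1))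
              (fun x : Fin ((sdelta Γ - 1) * q) × Fin 2 =>
                salpha Γ (sdelta Γ - 1 + (x.1.val + 1 + q - 1) / q))),
          (∀ φ, e (HU (rootAdj T τ) (rootχ T τ) φ)
              = TargU (Sum.elim (fun _ : Fin q => salpha Γ (sdelta Γ - 1))
                  (fun x : Fin ((sdelta Γ - 1) * q) × Fin 2 =>
                    salpha Γ (sdelta Γ - 1 + (x.1.val + 1 + q - 1) / q)))
                  (e φ))
          ∧ (∀ (d : ℚ) (φ : Hmod (rootAdj T τ) (rootχ T τ)),
              HHomog (rootχ T τ)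
                  ((q : ℚ) * (sdelta Γ : ℚ) * ((sdelta Γ : ℚ) - 1)) d φ.1
                ↔ TargHomog 0
                    (Sum.elim (fun _ : Fin q => (0 : ℚ))
                      (fun x : Fin ((sdelta Γ - 1) * q) × Fin 2 =>
                        ((((x.1.val + 1) / q + 1 : ℕ) : ℚ)
                          * (((x.1.val + 1) % q + (x.1.val + 1) : ℕ) : ℚ))))
                    d (e φ)) := by
  refine ⟨tA_val Γ q hq hδ1, ?_⟩
  have hTN : T = 2*((2*sdelta Γ - 1)*q) := by rw [hT, T_val Γ q hq hδ1]
  subst hτ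
  refine ⟨eEquiv Γ q hq hδ1 hfin hsym T hTN, ?_, ?_⟩
  · intro φ
    exact eEquiv_U Γ q hq hδ1 hfin hsym T hTN φ
  · intro d φ
    rw [HH_iff_leaf Γ q hq hδ1 hfin hsym T hTN d φ]
    exact leaf_iff_targ Γ q hq hδ1 hfin hsym T hTN d φ
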